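/- arXiv:math/0308230 — 6 statements merged into one kernel-verified Lean document; each statement's English description precedes it below -/
import Mathlib

section
/- For every b' in the commutant B' there exists a unique bounded operator ρ'(b') ∈ B(H) satisfying ρ'(b')(x g) = x (b' g) for all x ∈ E and g ∈ G; moreover ‖ρ'(b')‖ ≤ ‖b'‖, and the resulting map b' ↦ ρ'(b') is a unital *-homomorphism from B' into B(H). -/
open ContinuousLinearMap

/-- A set of bounded operators is closed in the strong operator topology, i.e. the
topology of pointwise norm convergence: every bounded operator lying in the closure of
the set inside `G → H` (with the product topology of the norm topologies) belongs to it. -/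
def SOTClosed {G H : Type*} [NormedAddCommGroup G] [InnerProductSpace ℂ G]
    [NormedAddCommGroup H] [InnerProductSpace ℂ H] (E : Set (G →L[ℂ] H)) : Prop :=
  ∀ T : G →L[ℂ] H, ⇑T ∈ closure ((fun S : G →L[ℂ] H => ⇑S) '' E) → T ∈ E

section AuxRep

local notation "⟪" x ", " y "⟫" => @inner ℂ _ _ x y

variable {G H : Type*}
    [NormedAddCommGroup G] [InnerProductSpace ℂ G] [CompleteSpace G]
    [NormedAddCommGroup H] [InnerProductSpace ℂ H] [CompleteSpace H]
    (B : VonNeumannAlgebra G)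
    (E : Submodule ℂ (G →L[ℂ] H))

theorem termwise_aux (hE1 : ∀ x ∈ E, ∀ y ∈ E, (adjoint x).comp y ∈ B)
    {b' : G →L[ℂ] G} (hb' : b' ∈ B.commutant)
    {x y : G →L[ℂ] H} (hx : x ∈ E) (hy : y ∈ E) (u v : G) :
    ⟪x (b' u), y v⟫ = ⟪x u, y (star b' v)⟫ := by
  have ha : (adjoint x).comp y ∈ B := hE1 x hx y hy
  have hsb : star b' ∈ B.commutant := star_mem hb'
  have hcomm : (adjoint x).comp y * star b' = star b' * ((adjoint x).comp y) :=
    VonNeumannAlgebra.mem_commutant_iff.mp hsb _ ha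
  have h1 : ⟪x (b' u), y v⟫ = ⟪b' u, ((adjoint x).comp y) v⟫ :=
    (adjoint_inner_right x (b' u) (y v)).symm
  have h2 : ⟪b' u, ((adjoint x).comp y) v⟫ = ⟪u, (adjoint b') (((adjoint x).comp y) v)⟫ :=
    (adjoint_inner_right b' u _).symm
  have h3 : (adjoint b') (((adjoint x).comp y) v) = ((adjoint x).comp y) ((star b') v) := by
    rw [← star_eq_adjoint]
    have := congrArg (fun z => z v) hcomm.symm
    simpa [mul_apply] using this
  have h4 : ⟪u, ((adjoint x).comp y) ((star b') v)⟫ = ⟪x u, y (star b' v)⟫ :=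
    adjoint_inner_right x u (y (star b' v))
  rw [h1, h2, h3, h4]

theorem key_bound (hE1 : ∀ x ∈ E, ∀ y ∈ E, (adjoint x).comp y ∈ B)
    {b' : G →L[ℂ] G} (hb' : b' ∈ B.commutant)
    {ι : Type*} (s : Finset ι) (x : ι → G →L[ℂ] H) (hx : ∀ i, x i ∈ E) (g : ι → G) :
    ‖∑ i ∈ s, x i (b' (g i))‖ ≤ ‖b'‖ * ‖∑ i ∈ s, x i (g i)‖ := by
  set w : (G →L[ℂ] G) → H := fun a => ∑ i ∈ s, x i (a (g i)) with hw
  set M : ℝ := ‖w 1‖ with hM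
  set C : ℝ := ∑ i ∈ s, ‖x i‖ * ‖g i‖ with hC
  have hM0 : 0 ≤ M := norm_nonneg _
  have hC0 : 0 ≤ C := Finset.sum_nonneg fun i _ => by positivity
  -- the key inner product identity
  have hinner : ∀ b'' ∈ B.commutant, ∀ d c' : G →L[ℂ] G,
      ⟪w (b'' * d), w c'⟫ = ⟪w d, w (star b'' * c')⟫ := by
    intro b'' hb'' d c'
    simp only [hw, sum_inner, inner_sum]
    refine Finset.sum_congr rfl fun i _ => Finset.sum_congr rfl fun j _ => ?_
    have := termwise_aux B E hE1 hb'' (hx j) (hx i) (d (g j)) (c' (g i))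
    simpa [mul_apply] using this
  -- crude bound
  have hcrude : ∀ a : G →L[ℂ] G, ‖w a‖ ≤ C * ‖a‖ := by
    intro a
    calc ‖w a‖ ≤ ∑ i ∈ s, ‖x i (a (g i))‖ := norm_sum_le _ _
      _ ≤ ∑ i ∈ s, ‖x i‖ * ‖g i‖ * ‖a‖ := by
          refine Finset.sum_le_sum fun i _ => ?_
          calc ‖x i (a (g i))‖ ≤ ‖x i‖ * ‖a (g i)‖ := le_opNorm _ _
            _ ≤ ‖x i‖ * (‖a‖ * ‖g i‖) :=
                mul_le_mul_of_nonneg_left (le_opNorm _ _) (norm_nonneg _)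
            _ = ‖x i‖ * ‖g i‖ * ‖a‖ := by ring
      _ = C * ‖a‖ := by rw [hC, Finset.sum_mul]
  -- squaring step
  have hsq : ∀ d ∈ B.commutant, ‖w d‖ ^ 2 ≤ M * ‖w (star d * d)‖ := by
    intro d hd
    have h1 : (⟪w d, w d⟫ : ℂ) = ⟪w 1, w (star d * d)⟫ := by
      have := hinner d hd 1 d
      rwa [mul_one] at this
    have h2 : ‖w d‖ ^ 2 = ‖(⟪w d, w d⟫ : ℂ)‖ := by
      rw [inner_self_eq_norm_sq_to_K]
      simp [pow_two]
    rw [h2, h1]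
    calc ‖(⟪w 1, w (star d * d)⟫ : ℂ)‖ ≤ ‖w 1‖ * ‖w (star d * d)‖ := norm_inner_le_norm _ _
      _ = M * ‖w (star d * d)‖ := rfl
  -- iteration for self-adjoint elements
  have hiter : ∀ d, d ∈ B.commutant → star d = d → ∀ n : ℕ,
      ‖w d‖ ^ (2 ^ n) ≤ M ^ (2 ^ n - 1) * ‖w (d ^ (2 ^ n))‖ := by
    intro d hd hsd n
    induction n with
    | zero => simp
    | succ n ih =>
        have h21 : (1:ℕ) ≤ 2 ^ n := Nat.one_le_two_pow
        have hdp : d ^ (2 ^ n) ∈ B.commutant := pow_mem hd _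
        have hsdp : star (d ^ (2 ^ n)) = d ^ (2 ^ n) := by rw [star_pow, hsd]
        have hsq' : ‖w (d ^ (2 ^ n))‖ ^ 2 ≤ M * ‖w (d ^ (2 ^ (n+1)))‖ := by
          have := hsq (d ^ (2 ^ n)) hdp
          rwa [hsdp, ← pow_add, ← two_mul, ← pow_succ'] at this
        have step1 : ‖w d‖ ^ (2 ^ (n+1)) ≤ (M ^ (2 ^ n - 1)) ^ 2 * ‖w (d ^ (2 ^ n))‖ ^ 2 := by
          have h := pow_le_pow_left₀ (by positivity) ih 2
          calc ‖w d‖ ^ (2 ^ (n+1)) = (‖w d‖ ^ (2 ^ n)) ^ 2 := by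
                rw [← pow_mul, pow_succ]
            _ ≤ (M ^ (2 ^ n - 1) * ‖w (d ^ (2 ^ n))‖) ^ 2 := h
            _ = (M ^ (2 ^ n - 1)) ^ 2 * ‖w (d ^ (2 ^ n))‖ ^ 2 := by rw [mul_pow]
        have step2 : (M ^ (2 ^ n - 1)) ^ 2 * ‖w (d ^ (2 ^ n))‖ ^ 2
            ≤ (M ^ (2 ^ n - 1)) ^ 2 * (M * ‖w (d ^ (2 ^ (n+1)))‖) :=
          mul_le_mul_of_nonneg_left hsq' (by positivity)
        have hexp : (M ^ (2 ^ n - 1)) ^ 2 * M = M ^ (2 ^ (n+1) - 1) := by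
          rw [← pow_mul, ← pow_succ]
          congr 1
          have : 2 ^ (n+1) = 2 * 2 ^ n := by rw [pow_succ, mul_comm]
          omega
        calc ‖w d‖ ^ (2 ^ (n+1))
            ≤ (M ^ (2 ^ n - 1)) ^ 2 * (M * ‖w (d ^ (2 ^ (n+1)))‖) := le_trans step1 step2
          _ = M ^ (2 ^ (n+1) - 1) * ‖w (d ^ (2 ^ (n+1)))‖ := by rw [← hexp]; ring
  -- norm bound for self-adjoint elements
  have hself : ∀ d, d ∈ B.commutant → star d = d → ‖w d‖ ≤ M * ‖d‖ := by
    intro d hd hsd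
    have hpow : ∀ n : ℕ, ‖w d‖ ^ (2 ^ n) ≤ M ^ (2 ^ n - 1) * (C * ‖d‖ ^ (2 ^ n)) := by
      intro n
      refine le_trans (hiter d hd hsd n) (mul_le_mul_of_nonneg_left ?_ (by positivity))
      calc ‖w (d ^ (2 ^ n))‖ ≤ C * ‖d ^ (2 ^ n)‖ := hcrude _
        _ ≤ C * ‖d‖ ^ (2 ^ n) :=
            mul_le_mul_of_nonneg_left (norm_pow_le' d (Nat.pos_of_ne_zero (by positivity))) hC0
    rcases eq_or_lt_of_le hM0 with hMz | hMpos
    · -- M = 0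
      have := hpow 1
      simp only [← hMz] at this
      norm_num at this
      have : ‖w d‖ = 0 := by simp [this]
      rw [this, ← hMz]
      positivity
    rcases eq_or_lt_of_le (norm_nonneg d) with hdz | hdpos
    · -- ‖d‖ = 0
      have hd0 : d = 0 := norm_eq_zero.mp hdz.symm
      have hw0 : w d = 0 := by simp [hw, hd0]
      rw [hw0]
      simp
      positivity
    · by_contra hlt
      push_neg at hlt
      set q : ℝ := ‖w d‖ / (M * ‖d‖) with hq
      have hq1 : 1 < q := (one_lt_div (by positivity)).mpr hlt
      have hqn : ∀ n : ℕ, q ^ n ≤ C / M := by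
        intro n
        have h1 : q ^ n ≤ q ^ (2 ^ n) :=
          pow_le_pow_right₀ hq1.le (Nat.le_of_lt (Nat.lt_two_pow_self (n := n)))
        refine le_trans h1 ?_
        rw [hq, div_pow, div_le_div_iff₀ (by positivity) hMpos]
        have h2 := mul_le_mul_of_nonneg_right (hpow n) hM0
        calc ‖w d‖ ^ (2 ^ n) * M ≤ M ^ (2 ^ n - 1) * (C * ‖d‖ ^ (2 ^ n)) * M := h2
          _ = M ^ ((2 ^ n - 1) + 1) * (C * ‖d‖ ^ (2 ^ n)) := by rw [pow_succ]; ring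
          _ = M ^ (2 ^ n) * (C * ‖d‖ ^ (2 ^ n)) := by
              congr 2
              have : (1:ℕ) ≤ 2 ^ n := Nat.one_le_two_pow
              omega
          _ = C * (M * ‖d‖) ^ (2 ^ n) := by rw [mul_pow]; ring
      obtain ⟨n, hn⟩ := ((tendsto_pow_atTop_atTop_of_one_lt hq1).eventually_gt_atTop (C / M)).exists
      exact absurd (hqn n) (not_le.mpr hn)
  -- conclusion
  have hc : star b' * b' ∈ B.commutant := mul_mem (star_mem hb') hb'
  have hcs : star (star b' * b') = star b' * b' := by rw [star_mul, star_star]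
  have h1 : ‖w b'‖ ^ 2 ≤ M * ‖w (star b' * b')‖ := hsq b' hb'
  have h2 : ‖w (star b' * b')‖ ≤ M * (‖b'‖ * ‖b'‖) := by
    have := hself _ hc hcs
    rwa [CStarRing.norm_star_mul_self] at this
  have hkey : ‖w b'‖ ^ 2 ≤ (‖b'‖ * M) ^ 2 := by
    nlinarith [mul_le_mul_of_nonneg_left h2 hM0]
  have hfin : ‖w b'‖ ≤ ‖b'‖ * M :=
    (pow_le_pow_iff_left₀ (norm_nonneg _) (by positivity) two_ne_zero).mp hkey
  have hw1 : w 1 = ∑ i ∈ s, x i (g i) := by simp [hw]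
  calc ‖∑ i ∈ s, x i (b' (g i))‖ = ‖w b'‖ := rfl
    _ ≤ ‖b'‖ * M := hfin
    _ = ‖b'‖ * ‖∑ i ∈ s, x i (g i)‖ := by rw [hM, hw1]

theorem uniq_aux
    (hE4 : Dense (Submodule.span ℂ {h : H | ∃ x ∈ E, ∃ g : G, x g = h} : Set H))
    (T S : H →L[ℂ] H) (h : ∀ x ∈ E, ∀ g : G, T (x g) = S (x g)) : T = S := by
  have hsub : (Submodule.span ℂ {h : H | ∃ x ∈ E, ∃ g : G, x g = h} : Set H)
      ⊆ {v : H | T v = S v} := by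
    intro v hv
    refine Submodule.span_induction (p := fun v _ => T v = S v) ?_ ?_ ?_ ?_ hv
    · rintro _ ⟨x, hx, g, rfl⟩; exact h x hx g
    · simp
    · intro a b _ _ ha hb; simp [map_add, ha, hb]
    · intro c a _ ha; simp [map_smul, ha]
  have hclosed : IsClosed {v : H | T v = S v} := isClosed_eq T.continuous S.continuous
  have h2 : closure (Submodule.span ℂ {h : H | ∃ x ∈ E, ∃ g : G, x g = h} : Set H)
      ⊆ {v : H | T v = S v} := hclosed.closure_subset_iff.mpr hsub
  rw [hE4.closure_eq] at h2
  exact ContinuousLinearMap.ext fun v => h2 (Set.mem_univ v)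

theorem inner_ext_aux
    (hE4 : Dense (Submodule.span ℂ {h : H | ∃ x ∈ E, ∃ g : G, x g = h} : Set H))
    (u v : H) (h : ∀ y ∈ E, ∀ f : G, ⟪u, y f⟫ = ⟪v, y f⟫) : u = v := by
  have hsub : (Submodule.span ℂ {h : H | ∃ x ∈ E, ∃ g : G, x g = h} : Set H)
      ⊆ {w : H | ⟪u, w⟫ = ⟪v, w⟫} := by
    intro w hw
    refine Submodule.span_induction (p := fun w _ => (⟪u, w⟫ : ℂ) = ⟪v, w⟫) ?_ ?_ ?_ ?_ hw
    · rintro _ ⟨y, hy, f, rfl⟩; exact h y hy f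
    · simp
    · intro a b _ _ ha hb; simp [inner_add_right, ha, hb]
    · intro c a _ ha; simp [inner_smul_right, ha]
  have hclosed : IsClosed {w : H | ⟪u, w⟫ = ⟪v, w⟫} :=
    isClosed_eq (Continuous.inner continuous_const continuous_id)
      (Continuous.inner continuous_const continuous_id)
  have h2 : closure (Submodule.span ℂ {h : H | ∃ x ∈ E, ∃ g : G, x g = h} : Set H)
      ⊆ {w : H | ⟪u, w⟫ = ⟪v, w⟫} := hclosed.closure_subset_iff.mpr hsub
  rw [hE4.closure_eq] at h2
  exact ext_inner_right ℂ fun w => h2 (Set.mem_univ w)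

theorem exists_aux (hE1 : ∀ x ∈ E, ∀ y ∈ E, (adjoint x).comp y ∈ B)
    (hE4 : Dense (Submodule.span ℂ {h : H | ∃ x ∈ E, ∃ g : G, x g = h} : Set H))
    {b' : G →L[ℂ] G} (hb' : b' ∈ B.commutant) :
    ∃ T : H →L[ℂ] H, (∀ x ∈ E, ∀ g : G, T (x g) = x (b' g)) ∧ ‖T‖ ≤ ‖b'‖ := by
  classical
  set D : Submodule ℂ H := Submodule.span ℂ {h : H | ∃ x ∈ E, ∃ g : G, x g = h} with hD
  let v : (E × G) → H := fun p => (p.1 : G →L[ℂ] H) p.2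
  let Φ : ((E × G) →₀ ℂ) →ₗ[ℂ] H := Finsupp.linearCombination ℂ v
  let Ψ : ((E × G) →₀ ℂ) →ₗ[ℂ] H :=
    Finsupp.linearCombination ℂ (fun p : E × G => (p.1 : G →L[ℂ] H) (b' p.2))
  have hrange : LinearMap.range Φ = D := by
    rw [hD, Finsupp.range_linearCombination]
    congr 1
    ext h
    constructor
    · rintro ⟨⟨x, g⟩, rfl⟩; exact ⟨(x : G →L[ℂ] H), x.2, g, rfl⟩
    · rintro ⟨x, hx, g, rfl⟩; exact ⟨(⟨x, hx⟩, g), rfl⟩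
  have hbound : ∀ f : (E × G) →₀ ℂ, ‖Ψ f‖ ≤ ‖b'‖ * ‖Φ f‖ := by
    intro f
    have := key_bound B E hE1 hb' f.support (fun p : E × G => (p.1 : G →L[ℂ] H))
      (fun p => p.1.2) (fun p => f p • p.2)
    simpa [Φ, Ψ, v, Finsupp.linearCombination_apply, Finsupp.sum, map_smul] using this
  have hker : LinearMap.ker Φ ≤ LinearMap.ker Ψ := by
    intro f hf
    rw [LinearMap.mem_ker] at hf ⊢
    have h0 : ‖Ψ f‖ ≤ 0 := by simpa [hf] using hbound f
    exact norm_le_zero_iff.mp h0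
  let q : (((E × G) →₀ ℂ) ⧸ LinearMap.ker Φ) →ₗ[ℂ] H := Submodule.liftQ _ Ψ hker
  let eΦ := Φ.quotKerEquivRange
  let ι : D ≃ₗ[ℂ] LinearMap.range Φ := LinearEquiv.ofEq _ _ hrange.symm
  let g₀ : D →ₗ[ℂ] H := q ∘ₗ (eΦ.symm.toLinearMap ∘ₗ ι.toLinearMap)
  have hg₀ : ∀ (f : (E × G) →₀ ℂ) (hmem : Φ f ∈ D), g₀ ⟨Φ f, hmem⟩ = Ψ f := by
    intro f hmem
    have hι : ι ⟨Φ f, hmem⟩ = ⟨Φ f, LinearMap.mem_range_self Φ f⟩ := rfl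
    have hsymm := Φ.quotKerEquivRange_symm_apply_image f (LinearMap.mem_range_self Φ f)
    show q (eΦ.symm (ι ⟨Φ f, hmem⟩)) = Ψ f
    rw [hι, hsymm]
    exact Submodule.liftQ_apply _ _ _
  have hg₀bound : ∀ h : D, ‖g₀ h‖ ≤ ‖b'‖ * ‖h‖ := by
    rintro ⟨h, hh⟩
    have : h ∈ LinearMap.range Φ := hrange.symm ▸ hh
    obtain ⟨f, hf⟩ := this
    have hmem : Φ f ∈ D := hf.symm ▸ hh
    have e1 : (⟨h, hh⟩ : D) = ⟨Φ f, hmem⟩ := Subtype.ext hf.symm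
    rw [e1, hg₀ f hmem]
    calc ‖Ψ f‖ ≤ ‖b'‖ * ‖Φ f‖ := hbound f
      _ = ‖b'‖ * ‖(⟨Φ f, hmem⟩ : D)‖ := rfl
  let g₁ : D →L[ℂ] H := g₀.mkContinuous ‖b'‖ hg₀bound
  let e : D →L[ℂ] H := D.subtypeL
  have hde : DenseRange e := by
    have h1 : Set.range e = (D : Set H) := Subtype.range_coe
    rw [DenseRange, h1]
    exact hE4
  have hiso : Isometry e := isometry_subtype_coe
  have hue : IsUniformInducing e := hiso.isUniformInducing
  refine ⟨g₁.extend e, ?_, ?_⟩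
  · intro x hx g
    have hmem : x g ∈ D := Submodule.subset_span ⟨x, hx, g, rfl⟩
    have h1 : x g = e ⟨x g, hmem⟩ := rfl
    rw [h1, ContinuousLinearMap.extend_eq (f := g₁) (e := e) (h_dense := hde) (h_e := hue)]
    have h2 : g₁ ⟨x g, hmem⟩ = g₀ ⟨x g, hmem⟩ := rfl
    have h3 : Φ (Finsupp.single (⟨x, hx⟩, g) 1) = x g := by
      simp [Φ, v, Finsupp.linearCombination_single]
    have hmem' : Φ (Finsupp.single ((⟨x, hx⟩ : E), g) 1) ∈ D := h3.symm ▸ hmem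
    have h4 : (⟨x g, hmem⟩ : D) = ⟨Φ (Finsupp.single (⟨x, hx⟩, g) 1), hmem'⟩ :=
      Subtype.ext h3.symm
    rw [h2, h4, hg₀]
    simp [Ψ, Finsupp.linearCombination_single]
  · have hN : ∀ x : D, ‖x‖ ≤ ((1 : NNReal) : ℝ) * ‖e x‖ := by
      intro x
      have hx : ‖e x‖ = ‖x‖ := hiso.norm_map_of_map_zero (map_zero e) x
      rw [hx]
      simp
    calc ‖g₁.extend e‖ ≤ ((1 : NNReal) : ℝ) * ‖g₁‖ :=
          ContinuousLinearMap.opNorm_extend_le (f := g₁) (e := e) (h_dense := hde) (h_e := hN)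
      _ ≤ ‖b'‖ := by simpa using g₀.mkContinuous_norm_le (norm_nonneg b') hg₀bound

theorem main_exists_unique
    (hE1 : ∀ x ∈ E, ∀ y ∈ E, (adjoint x).comp y ∈ B)
    (hE4 : Dense (Submodule.span ℂ {h : H | ∃ x ∈ E, ∃ g : G, x g = h} : Set H)) :
    ∃ ρ : (G →L[ℂ] G) → (H →L[ℂ] H),
      (∀ b' ∈ B.commutant, ∀ x ∈ E, ∀ g : G, ρ b' (x g) = x (b' g)) ∧
      (∀ b' ∈ B.commutant, ∀ T : H →L[ℂ] H,
        (∀ x ∈ E, ∀ g : G, T (x g) = x (b' g)) → T = ρ b') ∧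
      (∀ b' ∈ B.commutant, ‖ρ b'‖ ≤ ‖b'‖) ∧
      ρ 1 = 1 ∧
      (∀ a ∈ B.commutant, ∀ b ∈ B.commutant, ρ (a * b) = ρ a * ρ b) ∧
      (∀ a ∈ B.commutant, ∀ b ∈ B.commutant, ρ (a + b) = ρ a + ρ b) ∧
      (∀ (c : ℂ), ∀ a ∈ B.commutant, ρ (c • a) = c • ρ a) ∧
      (∀ a ∈ B.commutant, ρ (star a) = star (ρ a)) := by
  classical
  have hex : ∀ b' : G →L[ℂ] G, b' ∈ B.commutant →
      ∃ T : H →L[ℂ] H, (∀ x ∈ E, ∀ g : G, T (x g) = x (b' g)) ∧ ‖T‖ ≤ ‖b'‖ :=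
    fun b' hb' => exists_aux B E hE1 hE4 hb'
  choose! ρ hρ1 hρ2 using hex
  have huniq : ∀ b' ∈ B.commutant, ∀ T : H →L[ℂ] H,
      (∀ x ∈ E, ∀ g : G, T (x g) = x (b' g)) → T = ρ b' := by
    intro b' hb' T hT
    exact uniq_aux E hE4 T (ρ b') fun x hx g => (hT x hx g).trans (hρ1 b' hb' x hx g).symm
  have hone : (1 : G →L[ℂ] G) ∈ B.commutant := one_mem _
  refine ⟨ρ, hρ1, huniq, hρ2, ?_, ?_, ?_, ?_, ?_⟩
  · -- ρ 1 = 1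
    exact (huniq 1 hone 1 (fun x hx g => by simp)).symm
  · -- multiplicative
    intro a ha b hb
    have hab : a * b ∈ B.commutant := mul_mem ha hb
    refine (huniq (a * b) hab (ρ a * ρ b) ?_).symm
    intro x hx g
    rw [ContinuousLinearMap.mul_apply, hρ1 b hb x hx g, hρ1 a ha x hx (b g),
      ContinuousLinearMap.mul_apply]
  · -- additive
    intro a ha b hb
    have hab : a + b ∈ B.commutant := add_mem ha hb
    refine (huniq (a + b) hab (ρ a + ρ b) ?_).symm
    intro x hx g
    rw [ContinuousLinearMap.add_apply, hρ1 a ha x hx g, hρ1 b hb x hx g,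
      ContinuousLinearMap.add_apply, ← map_add]
  · -- smul
    intro c a ha
    have hca : c • a ∈ B.commutant := by
      rw [VonNeumannAlgebra.mem_commutant_iff]
      intro g hg
      rw [mul_smul_comm, smul_mul_assoc, VonNeumannAlgebra.mem_commutant_iff.mp ha g hg]
    refine (huniq (c • a) hca (c • ρ a) ?_).symm
    intro x hx g
    rw [ContinuousLinearMap.smul_apply, hρ1 a ha x hx g, ContinuousLinearMap.smul_apply,
      ← map_smul]
  · -- star
    intro a ha
    have hsa : star a ∈ B.commutant := star_mem ha
    refine (huniq (star a) hsa (star (ρ a)) ?_).symm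
    intro x hx g
    rw [ContinuousLinearMap.star_eq_adjoint]
    refine inner_ext_aux E hE4 (adjoint (ρ a) (x g)) (x (star a g)) ?_
    intro y hy f
    have hb : (adjoint y).comp x ∈ B := hE1 y hy x hx
    have hsb : star ((adjoint y).comp x) ∈ B := star_mem hb
    have hcomm : star ((adjoint y).comp x) * a = a * star ((adjoint y).comp x) :=
      VonNeumannAlgebra.mem_commutant_iff.mp ha _ hsb
    calc ⟪adjoint (ρ a) (x g), y f⟫
        = ⟪x g, ρ a (y f)⟫ := adjoint_inner_left (ρ a) (y f) (x g)
      _ = ⟪x g, y (a f)⟫ := by rw [hρ1 a ha y hy f]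
      _ = ⟪((adjoint y).comp x) g, a f⟫ := (adjoint_inner_left y (a f) (x g)).symm
      _ = ⟪g, (star ((adjoint y).comp x)) (a f)⟫ := by
          rw [ContinuousLinearMap.star_eq_adjoint]
          exact (adjoint_inner_right ((adjoint y).comp x) g (a f)).symm
      _ = ⟪g, a ((star ((adjoint y).comp x)) f)⟫ := by
          have := congrArg (fun z => z f) hcomm
          simp only [ContinuousLinearMap.mul_apply] at this
          rw [this]
      _ = ⟪star a g, (star ((adjoint y).comp x)) f⟫ := by
          rw [ContinuousLinearMap.star_eq_adjoint]
          exact (adjoint_inner_left a _ g).symm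
      _ = ⟪((adjoint y).comp x) (star a g), f⟫ := by
          rw [ContinuousLinearMap.star_eq_adjoint]
          exact adjoint_inner_right ((adjoint y).comp x) (star a g) f
      _ = ⟪x (star a g), y f⟫ := adjoint_inner_left y f (x (star a g))

end AuxRep

/-- For every `b'` in the commutant `B'` there is a unique bounded operator
`ρ'(b')` on `H` with `ρ'(b') (x g) = x (b' g)`; it satisfies `‖ρ'(b')‖ ≤ ‖b'‖` and
`b' ↦ ρ'(b')` is a unital *-homomorphism. -/
theorem exists_unique_commutant_representation
    {G H : Type*}
    [NormedAddCommGroup G] [InnerProductSpace ℂ G] [CompleteSpace G]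
    [NormedAddCommGroup H] [InnerProductSpace ℂ H] [CompleteSpace H]
    (B : VonNeumannAlgebra G)
    (E : Submodule ℂ (G →L[ℂ] H))
    (hE1 : ∀ x ∈ E, ∀ y ∈ E, (adjoint x).comp y ∈ B)
    (hE2 : ∀ x ∈ E, ∀ b ∈ B, x.comp b ∈ E)
    (hE3 : SOTClosed (E : Set (G →L[ℂ] H)))
    (hE4 : Dense (Submodule.span ℂ {h : H | ∃ x ∈ E, ∃ g : G, x g = h} : Set H))
    :
    ∃ ρ : (G →L[ℂ] G) → (H →L[ℂ] H),
      (∀ b' ∈ B.commutant, ∀ x ∈ E, ∀ g : G, ρ b' (x g) = x (b' g)) ∧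
      (∀ b' ∈ B.commutant, ∀ T : H →L[ℂ] H,
        (∀ x ∈ E, ∀ g : G, T (x g) = x (b' g)) → T = ρ b') ∧
      (∀ b' ∈ B.commutant, ‖ρ b'‖ ≤ ‖b'‖) ∧
      ρ 1 = 1 ∧
      (∀ a ∈ B.commutant, ∀ b ∈ B.commutant, ρ (a * b) = ρ a * ρ b) ∧
      (∀ a ∈ B.commutant, ∀ b ∈ B.commutant, ρ (a + b) = ρ a + ρ b) ∧
      (∀ (c : ℂ), ∀ a ∈ B.commutant, ρ (c • a) = c • ρ a) ∧
      (∀ a ∈ B.commutant, ρ (star a) = star (ρ a)) := by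
  exact main_exists_unique B E hE1 hE4
end

section
/- Let M ⊆ B(G ⊕ H) be the set of block operators (g, h) ↦ (b g + y* h, x g + a h) with b ∈ B, x ∈ E, y ∈ E, and a ∈ B^a(E). Then the commutant of M in B(G ⊕ H) equals the set of diagonal operators (g, h) ↦ (b' g, ρ'(b') h) with b' ∈ B'. -/
open ContinuousLinearMap

/-- The block operator `(g, h) ↦ (b g + yS h, x g + a h)` on the Hilbert space direct
sum `G ⊕ H` (realized as `WithLp 2 (G × H)`). -/
noncomputable def blockOp {G H : Type*}
    [NormedAddCommGroup G] [InnerProductSpace ℂ G] [CompleteSpace G]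
    [NormedAddCommGroup H] [InnerProductSpace ℂ H] [CompleteSpace H]
    (b : G →L[ℂ] G) (yS : H →L[ℂ] G) (x : G →L[ℂ] H) (a : H →L[ℂ] H) :
    WithLp 2 (G × H) →L[ℂ] WithLp 2 (G × H) :=
  (((WithLp.prodContinuousLinearEquiv 2 ℂ G H).symm :
      (G × H) →L[ℂ] WithLp 2 (G × H)).comp
    ((b.coprod yS).prod (x.coprod a))).comp
    (WithLp.prodContinuousLinearEquiv 2 ℂ G H : WithLp 2 (G × H) →L[ℂ] G × H)

section aux
variable {G H : Type*}
  [NormedAddCommGroup G] [InnerProductSpace ℂ G] [CompleteSpace G]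
  [NormedAddCommGroup H] [InnerProductSpace ℂ H] [CompleteSpace H]

set_option linter.unusedSectionVars false

lemma blockOp_apply (b : G →L[ℂ] G) (yS : H →L[ℂ] G) (x : G →L[ℂ] H) (a : H →L[ℂ] H)
    (v : WithLp 2 (G × H)) :
    blockOp b yS x a v = (WithLp.prodContinuousLinearEquiv 2 ℂ G H).symm
      (b ((WithLp.prodContinuousLinearEquiv 2 ℂ G H) v).1
         + yS ((WithLp.prodContinuousLinearEquiv 2 ℂ G H) v).2,
       x ((WithLp.prodContinuousLinearEquiv 2 ℂ G H) v).1
         + a ((WithLp.prodContinuousLinearEquiv 2 ℂ G H) v).2) := by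
  rfl

lemma blockOp_mul (b1 b2 : G →L[ℂ] G) (y1 y2 : H →L[ℂ] G) (x1 x2 : G →L[ℂ] H)
    (a1 a2 : H →L[ℂ] H) :
    blockOp b1 y1 x1 a1 * blockOp b2 y2 x2 a2 =
    blockOp (b1.comp b2 + y1.comp x2) (b1.comp y2 + y1.comp a2)
      (x1.comp b2 + a1.comp x2) (x1.comp y2 + a1.comp a2) := by
  ext v
  simp [blockOp_apply, mul_apply, map_add]
  constructor <;> abel

lemma blockOp_inj {b b' : G →L[ℂ] G} {y y' : H →L[ℂ] G} {x x' : G →L[ℂ] H}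
    {a a' : H →L[ℂ] H} (h : blockOp b y x a = blockOp b' y' x' a') :
    b = b' ∧ y = y' ∧ x = x' ∧ a = a' := by
  set e := WithLp.prodContinuousLinearEquiv 2 ℂ G H with he
  refine ⟨?_, ?_, ?_, ?_⟩
  · ext u
    have h1 := congrArg (fun T : WithLp 2 (G × H) →L[ℂ] WithLp 2 (G × H) =>
      (e (T (e.symm (u, 0)))).1) h
    simpa [blockOp_apply, he] using h1
  · ext u
    have h1 := congrArg (fun T : WithLp 2 (G × H) →L[ℂ] WithLp 2 (G × H) =>
      (e (T (e.symm (0, u)))).1) h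
    simpa [blockOp_apply, he] using h1
  · ext u
    have h1 := congrArg (fun T : WithLp 2 (G × H) →L[ℂ] WithLp 2 (G × H) =>
      (e (T (e.symm (u, 0)))).2) h
    simpa [blockOp_apply, he] using h1
  · ext u
    have h1 := congrArg (fun T : WithLp 2 (G × H) →L[ℂ] WithLp 2 (G × H) =>
      (e (T (e.symm (0, u)))).2) h
    simpa [blockOp_apply, he] using h1

lemma blockOp_decomp (T : WithLp 2 (G × H) →L[ℂ] WithLp 2 (G × H)) :
    T = blockOp
      ((fst ℂ G H).comp ((((WithLp.prodContinuousLinearEquiv 2 ℂ G H :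
          WithLp 2 (G × H) →L[ℂ] G × H).comp T).comp
        ((WithLp.prodContinuousLinearEquiv 2 ℂ G H).symm :
          (G × H) →L[ℂ] WithLp 2 (G × H))).comp (inl ℂ G H)))
      ((fst ℂ G H).comp ((((WithLp.prodContinuousLinearEquiv 2 ℂ G H :
          WithLp 2 (G × H) →L[ℂ] G × H).comp T).comp
        ((WithLp.prodContinuousLinearEquiv 2 ℂ G H).symm :
          (G × H) →L[ℂ] WithLp 2 (G × H))).comp (inr ℂ G H)))
      ((snd ℂ G H).comp ((((WithLp.prodContinuousLinearEquiv 2 ℂ G H :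
          WithLp 2 (G × H) →L[ℂ] G × H).comp T).comp
        ((WithLp.prodContinuousLinearEquiv 2 ℂ G H).symm :
          (G × H) →L[ℂ] WithLp 2 (G × H))).comp (inl ℂ G H)))
      ((snd ℂ G H).comp ((((WithLp.prodContinuousLinearEquiv 2 ℂ G H :
          WithLp 2 (G × H) →L[ℂ] G × H).comp T).comp
        ((WithLp.prodContinuousLinearEquiv 2 ℂ G H).symm :
          (G × H) →L[ℂ] WithLp 2 (G × H))).comp (inr ℂ G H))) := by
  set e := WithLp.prodContinuousLinearEquiv 2 ℂ G H with he
  ext v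
  have hv : v = e.symm ((e v).1, 0) + e.symm (0, (e v).2) := by
    rw [← map_add]
    simp
  apply e.injective
  rw [blockOp_apply]
  simp only [coe_comp', Function.comp_apply, ContinuousLinearEquiv.coe_coe, inl_apply,
    inr_apply, ContinuousLinearEquiv.apply_symm_apply]
  conv_lhs => rw [hv, map_add, map_add]
  ext <;> simp <;> rfl

end aux

/-- The commutant of the matrix algebra `M = [[B, E*], [E, Bᵃ(E)]]` acting on `G ⊕ H`
consists exactly of the diagonal operators `diag(b', ρ'(b'))` with `b' ∈ B'`. -/
theorem commutant_of_matrix_algebra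
    {G H : Type*}
    [NormedAddCommGroup G] [InnerProductSpace ℂ G] [CompleteSpace G]
    [NormedAddCommGroup H] [InnerProductSpace ℂ H] [CompleteSpace H]
    (B : VonNeumannAlgebra G)
    (E : Submodule ℂ (G →L[ℂ] H))
    (hE1 : ∀ x ∈ E, ∀ y ∈ E, (adjoint x).comp y ∈ B)
    (hE2 : ∀ x ∈ E, ∀ b ∈ B, x.comp b ∈ E)
    (hE3 : SOTClosed (E : Set (G →L[ℂ] H)))
    (hE4 : Dense (Submodule.span ℂ {h : H | ∃ x ∈ E, ∃ g : G, x g = h} : Set H))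
    (ρ' : (G →L[ℂ] G) → (H →L[ℂ] H))
    (hρ_one : ρ' 1 = 1)
    (hρ_mul : ∀ a ∈ B.commutant, ∀ b ∈ B.commutant, ρ' (a * b) = ρ' a * ρ' b)
    (hρ_add : ∀ a ∈ B.commutant, ∀ b ∈ B.commutant, ρ' (a + b) = ρ' a + ρ' b)
    (hρ_smul : ∀ (c : ℂ), ∀ a ∈ B.commutant, ρ' (c • a) = c • ρ' a)
    (hρ_star : ∀ a ∈ B.commutant, ρ' (star a) = star (ρ' a))
    (hρ_int : ∀ b' ∈ B.commutant, ∀ x ∈ E, ∀ g : G, ρ' b' (x g) = x (b' g))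
    :
    Set.centralizer
      {T : WithLp 2 (G × H) →L[ℂ] WithLp 2 (G × H) |
        ∃ b ∈ B, ∃ x ∈ E, ∃ y ∈ E, ∃ a : H →L[ℂ] H,
          ((∀ z ∈ E, a.comp z ∈ E) ∧ (∀ z ∈ E, (adjoint a).comp z ∈ E)) ∧
          T = blockOp b (adjoint y) x a}
    = {T : WithLp 2 (G × H) →L[ℂ] WithLp 2 (G × H) |
        ∃ b' ∈ B.commutant, T = blockOp b' 0 0 (ρ' b')} := by
  ext T
  simp only [Set.mem_centralizer_iff, Set.mem_setOf_eq]
  constructor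
  · intro hT
    -- decompose T into block components
    obtain ⟨b', y', x', a', hdec⟩ :
        ∃ b' y' x' a', T = blockOp b' y' x' a' :=
      ⟨_, _, _, _, blockOp_decomp T⟩
    -- elements of M of the form diag(b,0)
    have hMb : ∀ b ∈ B, blockOp b 0 0 0 * T = T * blockOp b 0 0 0 := by
      intro b hb
      refine hT _ ⟨b, hb, 0, E.zero_mem, 0, E.zero_mem, 0,
        ⟨fun z _ => by simpa using E.zero_mem, fun z _ => by simpa using E.zero_mem⟩, ?_⟩
      simp
    -- commuting with diag(1,0) kills off-diagonal terms
    have h1 := hMb 1 B.one_mem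
    rw [hdec, blockOp_mul, blockOp_mul] at h1
    obtain ⟨-, hy0, hx0, -⟩ := blockOp_inj h1
    simp only [comp_zero, zero_comp, add_zero, zero_add, one_def, comp_id, id_comp] at hy0 hx0
    -- b' is in the commutant
    have hb'mem : b' ∈ B.commutant := by
      rw [VonNeumannAlgebra.mem_commutant_iff]
      intro b hb
      have h2 := hMb b hb
      rw [hdec, blockOp_mul, blockOp_mul] at h2
      obtain ⟨hbb, -, -, -⟩ := blockOp_inj h2
      simp only [comp_zero, zero_comp, add_zero, zero_add] at hbb
      simpa [ContinuousLinearMap.mul_def] using hbb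
    -- commuting with lower-left x gives a' ∘ x = x ∘ b'
    have hax : ∀ x ∈ E, a'.comp x = x.comp b' := by
      intro x hx
      have h3 : blockOp 0 0 x 0 * T = T * blockOp 0 0 x 0 := by
        refine hT _ ⟨0, B.zero_mem, x, hx, 0, E.zero_mem, 0,
          ⟨fun z _ => by simpa using E.zero_mem, fun z _ => by simpa using E.zero_mem⟩, ?_⟩
        simp
      rw [hdec, blockOp_mul, blockOp_mul] at h3
      obtain ⟨-, -, hc, -⟩ := blockOp_inj h3
      simp only [comp_zero, zero_comp, add_zero, zero_add] at hc
      exact hc.symm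
    -- a' = ρ' b'
    have ha' : a' = ρ' b' := by
      apply ContinuousLinearMap.ext_on hE4
      rintro h ⟨x, hx, g, rfl⟩
      have := congrArg (fun f : G →L[ℂ] H => f g) (hax x hx)
      simpa [hρ_int b' hb'mem x hx g] using this
    refine ⟨b', hb'mem, ?_⟩
    rw [hdec, ha', hy0, ← hx0]
  · rintro ⟨b', hb', rfl⟩ S ⟨b, hb, x, hx, y, hy, a, ⟨ha1, ha2⟩, rfl⟩
    rw [blockOp_mul, blockOp_mul]
    have e1 : b.comp b' = b'.comp b := by
      have := (VonNeumannAlgebra.mem_commutant_iff.mp hb') b hb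
      simpa [mul_def] using this
    have e3 : (ρ' b').comp x = x.comp b' := by
      ext g
      exact hρ_int b' hb' x hx g
    have hsc : star b' ∈ B.commutant := star_mem hb'
    have e2 : (adjoint y).comp (ρ' b') = b'.comp (adjoint y) := by
      have h5 : (ρ' (star b')).comp y = y.comp (star b') := by
        ext g
        exact hρ_int _ hsc y hy g
      have h6 := congrArg adjoint h5
      rw [adjoint_comp, adjoint_comp, hρ_star b' hb', star_eq_adjoint b',
        star_eq_adjoint (ρ' b'), adjoint_adjoint, adjoint_adjoint] at h6
      exact h6
    have e4 : (ρ' b').comp a = a.comp (ρ' b') := by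
      apply ContinuousLinearMap.ext_on hE4
      rintro h ⟨x, hx, g, rfl⟩
      calc (ρ' b') (a (x g)) = (ρ' b') ((a.comp x) g) := rfl
        _ = (a.comp x) (b' g) := hρ_int b' hb' _ (ha1 x hx) g
        _ = a (x (b' g)) := rfl
        _ = a ((ρ' b') (x g)) := by rw [hρ_int b' hb' x hx g]
    simp only [comp_zero, zero_comp, add_zero, zero_add]
    rw [e1, e2, e3, e4]
end

section
/- B^a(E) is a von Neumann algebra acting on H: it is a unital *-subalgebra of B(H) that equals its own double commutant in B(H). -/
open ContinuousLinearMap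

noncomputable section
set_option linter.unusedSectionVars false
local notation "⟪" x ", " y "⟫" => @inner ℂ _ _ x y

section
variable {H : Type*} [NormedAddCommGroup H] [InnerProductSpace ℂ H] [CompleteSpace H]
    {ι : Type*} [Fintype ι] [DecidableEq ι]

instance vnaCompletePiLp : CompleteSpace (PiLp 2 (fun _ : ι => H)) :=
  inferInstance

def eqv (H : Type*) [NormedAddCommGroup H] [InnerProductSpace ℂ H]
    (ι : Type*) [Fintype ι] : PiLp 2 (fun _ : ι => H) ≃L[ℂ] (ι → H) :=
  PiLp.continuousLinearEquiv 2 ℂ _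

def Dg (ι : Type*) [Fintype ι] (c : H →L[ℂ] H) :
    PiLp 2 (fun _ : ι => H) →L[ℂ] PiLp 2 (fun _ : ι => H) :=
  ((eqv H ι).symm : (ι → H) →L[ℂ] PiLp 2 (fun _ : ι => H)) ∘L
    (ContinuousLinearMap.pi fun i => c ∘L ContinuousLinearMap.proj i) ∘L
    ((eqv H ι) : PiLp 2 (fun _ : ι => H) →L[ℂ] (ι → H))

lemma Dg_apply (c : H →L[ℂ] H) (v : PiLp 2 (fun _ : ι => H)) (i : ι) :
    (Dg ι c v) i = c (v i) := rfl

lemma Dg_adjoint (c : H →L[ℂ] H) : adjoint (Dg ι c) = Dg ι (adjoint c) := by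
  symm
  rw [ContinuousLinearMap.eq_adjoint_iff]
  intro u v
  rw [PiLp.inner_apply, PiLp.inner_apply]
  refine Finset.sum_congr rfl fun i _ => ?_
  rw [Dg_apply, Dg_apply, ContinuousLinearMap.adjoint_inner_left]

def inc (ι : Type*) [Fintype ι] [DecidableEq ι] (j : ι) : H →L[ℂ] PiLp 2 (fun _ : ι => H) :=
  ((eqv H ι).symm : (ι → H) →L[ℂ] PiLp 2 (fun _ : ι => H)) ∘L
    (ContinuousLinearMap.pi fun i => if i = j then ContinuousLinearMap.id ℂ H else 0)

lemma inc_apply (j : ι) (h : H) (i : ι) : (inc ι j h) i = if i = j then h else 0 := by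
  by_cases hij : i = j <;> simp [inc, eqv, hij]

def prj (ι : Type*) [Fintype ι] (i : ι) : PiLp 2 (fun _ : ι => H) →L[ℂ] H :=
  (ContinuousLinearMap.proj i) ∘L ((eqv H ι) : PiLp 2 (fun _ : ι => H) →L[ℂ] (ι → H))

lemma prj_apply (i : ι) (v : PiLp 2 (fun _ : ι => H)) : prj ι i v = v i := rfl

lemma sum_inc (v : PiLp 2 (fun _ : ι => H)) : v = ∑ j, inc ι j (v j) := by
  apply (eqv H ι).injective
  rw [map_sum]
  funext i
  simp [eqv, inc_apply, Finset.sum_apply]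

lemma Dg_comp_inc (c : H →L[ℂ] H) (j : ι) (h : H) :
    Dg ι c (inc ι j h) = inc ι j (c h) := by
  apply (eqv H ι).injective
  funext i
  show Dg ι c (inc ι j h) i = inc ι j (c h) i
  rw [Dg_apply, inc_apply, inc_apply]
  by_cases hij : i = j <;> simp [hij]

lemma coord_norm_le (f : PiLp 2 (fun _ : ι => H)) (i : ι) : ‖f i‖ ≤ ‖f‖ := by
  have hsq : ‖f‖ ^ 2 = ∑ j, ‖f j‖ ^ 2 := by
    have h1 : ⟪f, f⟫ = ∑ j, ⟪f j, f j⟫ := PiLp.inner_apply f f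
    calc ‖f‖ ^ 2 = RCLike.re ⟪f, f⟫ := (inner_self_eq_norm_sq f).symm
    _ = ∑ j, RCLike.re ⟪f j, f j⟫ := by rw [h1]; exact map_sum _ _ _
    _ = ∑ j, ‖f j‖ ^ 2 := Finset.sum_congr rfl fun j _ => inner_self_eq_norm_sq (f j)
  have h2 : ‖f i‖ ^ 2 ≤ ‖f‖ ^ 2 := by
    rw [hsq]
    exact Finset.single_le_sum (f := fun j => ‖f j‖ ^ 2) (fun j _ => sq_nonneg _)
      (Finset.mem_univ i)
  nlinarith [norm_nonneg f, norm_nonneg (f i)]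

/-- orthogonal projection onto a subspace invariant under `c` and `adjoint c` commutes with `c`. -/
lemma proj_comm {H' : Type*} [NormedAddCommGroup H'] [InnerProductSpace ℂ H']
    [CompleteSpace H'] (K : Submodule ℂ H') [K.HasOrthogonalProjection] (c : H' →L[ℂ] H')
    (hc : ∀ v ∈ K, c v ∈ K) (hc' : ∀ v ∈ K, adjoint c v ∈ K) (u : H') :
    (K.orthogonalProjectionOnto (c u) : H') = c (K.orthogonalProjectionOnto u) := by
  rw [← Submodule.starProjection_apply]
  apply Submodule.eq_starProjection_of_mem_orthogonal
  · exact hc _ (K.orthogonalProjectionOnto u).2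
  · have h1 : u - (K.orthogonalProjectionOnto u : H') ∈ Kᗮ :=
      Submodule.sub_starProjection_mem_orthogonal u
    rw [← map_sub, Submodule.mem_orthogonal]
    intro k hk
    rw [← ContinuousLinearMap.adjoint_inner_left]
    exact (Submodule.mem_orthogonal _ _).1 h1 _ (hc' k hk)

end

section Main
variable {G H : Type*}
    [NormedAddCommGroup G] [InnerProductSpace ℂ G] [CompleteSpace G]
    [NormedAddCommGroup H] [InnerProductSpace ℂ H] [CompleteSpace H]

lemma approx (E : Submodule ℂ (G →L[ℂ] H)) (Ba : Set (H →L[ℂ] H))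
    (hBa : Ba = {a : H →L[ℂ] H |
      (∀ x ∈ E, a.comp x ∈ E) ∧ (∀ x ∈ E, (adjoint a).comp x ∈ E)})
    (a : H →L[ℂ] H) (ha : a ∈ Set.centralizer (Set.centralizer Ba))
    (x : G →L[ℂ] H) (hx : x ∈ E)
    (ι : Type*) [Fintype ι] [DecidableEq ι] (g : ι → G) (ε : ℝ) (hε : 0 < ε) :
    ∃ z ∈ E, ∀ i, ‖a (x (g i)) - z (g i)‖ < ε := by
  classical
  set H' := PiLp 2 (fun _ : ι => H) with hH'
  haveI : CompleteSpace H' := inferInstance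
  -- the evaluation linear map
  let Φ : (G →L[ℂ] H) →ₗ[ℂ] H' :=
    { toFun := fun z => WithLp.toLp 2 (fun i => z (g i) : ι → H)
      map_add' := fun z w => by ext i; rfl
      map_smul' := fun c z => by ext i; rfl }
  have hΦ : ∀ z : G →L[ℂ] H, ∀ i, (Φ z) i = z (g i) := fun z i => rfl
  set K : Submodule ℂ H' := (E.map Φ).topologicalClosure with hK
  haveI : CompleteSpace K := (E.map Φ).isClosed_topologicalClosure.completeSpace_coe
  -- Ba is star-closed
  have hstar : ∀ c ∈ Ba, adjoint c ∈ Ba := by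
    intro c hc
    rw [hBa] at hc ⊢
    exact ⟨hc.2, by rw [adjoint_adjoint]; exact hc.1⟩
  -- K is invariant under Dg c for c ∈ Ba
  have hDmem : ∀ c ∈ Ba, ∀ v ∈ K, Dg ι c v ∈ K := by
    intro c hc v hv
    have hmt : Set.MapsTo (Dg ι c) (E.map Φ : Set H') (E.map Φ : Set H') := by
      rintro _ ⟨z, hz, rfl⟩
      refine ⟨c.comp z, (hBa ▸ hc : _).1 z hz, ?_⟩
      apply (eqv H ι).injective
      funext i
      show Φ (c.comp z) i = Dg ι c (Φ z) i
      rw [Dg_apply, hΦ, hΦ]; rfl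
    have hv' : v ∈ closure (E.map Φ : Set H') := by
      rw [← Submodule.topologicalClosure_coe]; exact hv
    have := map_mem_closure (Dg ι c).continuous hv' hmt
    rw [← Submodule.topologicalClosure_coe] at this
    exact this
  -- projection onto K
  set P : H' →L[ℂ] H' := K.subtypeL ∘L (K.orthogonalProjectionOnto) with hPdef
  have hPK : ∀ u : H', P u ∈ K := fun u => (K.orthogonalProjectionOnto u).2
  have hPfix : ∀ u ∈ K, P u = u := by
    intro u hu
    show (K.orthogonalProjectionOnto u : H') = u
    exact Submodule.starProjection_eq_self_iff.2 hu
  have hPc : ∀ c ∈ Ba, ∀ u : H', P (Dg ι c u) = Dg ι c (P u) := by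
    intro c hc u
    show (K.orthogonalProjectionOnto (Dg ι c u) : H') = Dg ι c (K.orthogonalProjectionOnto u)
    exact proj_comm K (Dg ι c) (hDmem c hc)
      (fun v hv => by rw [Dg_adjoint]; exact hDmem _ (hstar c hc) v hv) u
  -- matrix entries of P commute with everything in Ba
  have hpij : ∀ i j : ι, (prj ι i ∘L P ∘L inc ι j) ∈ Set.centralizer Ba := by
    intro i j c hc
    ext h
    show c (prj ι i (P (inc ι j h))) = prj ι i (P (inc ι j (c h)))
    rw [← Dg_comp_inc, hPc c hc, prj_apply, prj_apply, Dg_apply]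
  -- hence Dg a commutes with P
  have hTa : ∀ i j : ι, ∀ h : H,
      (prj ι i ∘L P ∘L inc ι j) (a h) = a ((prj ι i ∘L P ∘L inc ι j) h) := by
    intro i j h
    have h4 := ha _ (hpij i j)
    calc (prj ι i ∘L P ∘L inc ι j) (a h) = ((prj ι i ∘L P ∘L inc ι j) * a) h := rfl
      _ = (a * (prj ι i ∘L P ∘L inc ι j)) h := by rw [h4]
      _ = a ((prj ι i ∘L P ∘L inc ι j) h) := rfl
  have hPa : ∀ u : H', P (Dg ι a u) = Dg ι a (P u) := by
    intro u
    apply (eqv H ι).injective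
    funext i
    show P (Dg ι a u) i = Dg ι a (P u) i
    have h1 : Dg ι a u = ∑ j, inc ι j (a (u j)) := by
      conv_lhs => rw [sum_inc (Dg ι a u)]
      exact Finset.sum_congr rfl fun j _ => by rw [Dg_apply]
    have h2 : prj ι i (P u) = ∑ j, prj ι i (P (inc ι j (u j))) := by
      conv_lhs => rw [sum_inc u]
      rw [map_sum, map_sum]
    calc P (Dg ι a u) i
        = prj ι i (P (Dg ι a u)) := rfl
      _ = ∑ j, prj ι i (P (inc ι j (a (u j)))) := by rw [h1, map_sum, map_sum]
      _ = ∑ j, a (prj ι i (P (inc ι j (u j)))) := Finset.sum_congr rfl fun j _ => by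
            have := hTa i j (u j)
            simpa [ContinuousLinearMap.comp_apply] using this
      _ = a (∑ j, prj ι i (P (inc ι j (u j)))) := (map_sum a _ _).symm
      _ = a (prj ι i (P u)) := (congrArg a h2).symm
      _ = Dg ι a (P u) i := by rw [Dg_apply, prj_apply]
  -- conclude
  have hξ : Φ x ∈ K := Submodule.le_topologicalClosure _ ⟨x, hx, rfl⟩
  have hmem : Dg ι a (Φ x) ∈ K := by
    rw [← hPfix _ hξ, ← hPa]
    exact hPK _
  have hcl : Dg ι a (Φ x) ∈ closure (E.map Φ : Set H') := by
    rw [← Submodule.topologicalClosure_coe]; exact hmem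
  rw [Metric.mem_closure_iff] at hcl
  obtain ⟨b, hb, hdist⟩ := hcl ε hε
  obtain ⟨z, hz, rfl⟩ := hb
  refine ⟨z, hz, fun i => ?_⟩
  have h3 : ‖a (x (g i)) - z (g i)‖ = ‖(Dg ι a (Φ x) - Φ z) i‖ := by
    have : (Dg ι a (Φ x) - Φ z) i = a (x (g i)) - z (g i) := by
      show Dg ι a (Φ x) i - (Φ z) i = _
      rw [Dg_apply, hΦ, hΦ]
    rw [this]
  rw [h3]
  calc ‖(Dg ι a (Φ x) - Φ z) i‖ ≤ ‖Dg ι a (Φ x) - Φ z‖ := coord_norm_le _ i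
    _ < ε := by rw [← dist_eq_norm]; exact hdist


lemma keyE (E : Submodule ℂ (G →L[ℂ] H)) (hE3 : SOTClosed (E : Set (G →L[ℂ] H)))
    (Ba : Set (H →L[ℂ] H))
    (hBa : Ba = {a : H →L[ℂ] H |
      (∀ x ∈ E, a.comp x ∈ E) ∧ (∀ x ∈ E, (adjoint a).comp x ∈ E)})
    (a : H →L[ℂ] H) (ha : a ∈ Set.centralizer (Set.centralizer Ba))
    (x : G →L[ℂ] H) (hx : x ∈ E) : a.comp x ∈ E := by
  classical
  apply hE3
  rw [mem_closure_iff_nhds]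
  intro t ht
  rw [nhds_pi, Filter.mem_pi] at ht
  obtain ⟨I, hIfin, V, hV, hVt⟩ := ht
  haveI := hIfin.fintype
  by_cases hne : Nonempty I
  · choose ε hεpos hball using fun i : I =>
      Metric.mem_nhds_iff.1 (hV (i : G))
    obtain ⟨ε₀, hε₀pos, hε₀le⟩ : ∃ ε₀ > 0, ∀ i : I, ε₀ ≤ ε i := by
      refine ⟨Finset.univ.inf' Finset.univ_nonempty ε, ?_, ?_⟩
      · exact (Finset.lt_inf'_iff _).2 fun i _ => hεpos i
      · exact fun i => Finset.inf'_le _ (Finset.mem_univ i)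
    obtain ⟨z, hz, hzlt⟩ := approx E Ba hBa a ha x hx ↥I (fun i => (i : G)) ε₀ hε₀pos
    refine ⟨⇑z, ?_, ⟨z, hz, rfl⟩⟩
    apply hVt
    rw [Set.mem_pi]
    intro g hg
    apply hball ⟨g, hg⟩
    rw [Metric.mem_ball, dist_eq_norm]
    calc ‖z g - (a.comp x) g‖ = ‖a (x g) - z g‖ := by
          rw [ContinuousLinearMap.comp_apply, norm_sub_rev]
      _ < ε₀ := hzlt ⟨g, hg⟩
      _ ≤ ε ⟨g, hg⟩ := hε₀le _
  · refine ⟨⇑x, hVt ?_, ⟨x, hx, rfl⟩⟩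
    rw [Set.mem_pi]
    intro g hg
    exact absurd ⟨⟨g, hg⟩⟩ hne

end Main

end

/-- `Bᵃ(E)`, the set of adjointable operators on `E` realized in `B(H)`, is a von
Neumann algebra on `H`: a unital *-subalgebra of `B(H)` equal to its double commutant. -/
theorem adjointable_operators_vonNeumann
    {G H : Type*}
    [NormedAddCommGroup G] [InnerProductSpace ℂ G] [CompleteSpace G]
    [NormedAddCommGroup H] [InnerProductSpace ℂ H] [CompleteSpace H]
    (B : VonNeumannAlgebra G)
    (E : Submodule ℂ (G →L[ℂ] H))
    (hE1 : ∀ x ∈ E, ∀ y ∈ E, (adjoint x).comp y ∈ B)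
    (hE2 : ∀ x ∈ E, ∀ b ∈ B, x.comp b ∈ E)
    (hE3 : SOTClosed (E : Set (G →L[ℂ] H)))
    (hE4 : Dense (Submodule.span ℂ {h : H | ∃ x ∈ E, ∃ g : G, x g = h} : Set H))
    (Ba : Set (H →L[ℂ] H))
    (hBa : Ba = {a : H →L[ℂ] H |
      (∀ x ∈ E, a.comp x ∈ E) ∧ (∀ x ∈ E, (adjoint a).comp x ∈ E)}) :
    (1 ∈ Ba) ∧
    (∀ a ∈ Ba, ∀ b ∈ Ba, a + b ∈ Ba) ∧
    (∀ (c : ℂ), ∀ a ∈ Ba, c • a ∈ Ba) ∧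
    (∀ a ∈ Ba, ∀ b ∈ Ba, a * b ∈ Ba) ∧
    (∀ a ∈ Ba, star a ∈ Ba) ∧
    Set.centralizer (Set.centralizer Ba) = Ba := by
  have hstar : ∀ a ∈ Ba, star a ∈ Ba := by
    intro a ha
    rw [hBa] at ha ⊢
    refine ⟨fun x hx => ?_, fun x hx => ?_⟩
    · rw [star_eq_adjoint]; exact ha.2 x hx
    · rw [star_eq_adjoint, adjoint_adjoint]; exact ha.1 x hx
  refine ⟨?_, ?_, ?_, ?_, hstar, ?_⟩
  · rw [hBa]
    refine ⟨fun x hx => ?_, fun x hx => ?_⟩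
    · rw [show (1 : H →L[ℂ] H).comp x = x from ContinuousLinearMap.ext fun _ => rfl]; exact hx
    · rw [← star_eq_adjoint, star_one]; rw [show (1 : H →L[ℂ] H).comp x = x from ContinuousLinearMap.ext fun _ => rfl]; exact hx
  · intro a ha b hb
    rw [hBa] at ha hb ⊢
    refine ⟨fun x hx => ?_, fun x hx => ?_⟩
    · rw [ContinuousLinearMap.add_comp]; exact E.add_mem (ha.1 x hx) (hb.1 x hx)
    · rw [map_add, ContinuousLinearMap.add_comp]
      exact E.add_mem (ha.2 x hx) (hb.2 x hx)
  · intro c a ha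
    rw [hBa] at ha ⊢
    refine ⟨fun x hx => ?_, fun x hx => ?_⟩
    · rw [ContinuousLinearMap.smul_comp]; exact E.smul_mem c (ha.1 x hx)
    · rw [← star_eq_adjoint, star_smul, star_eq_adjoint,
        ContinuousLinearMap.smul_comp]
      exact E.smul_mem _ (ha.2 x hx)
  · intro a ha b hb
    rw [hBa] at ha hb ⊢
    refine ⟨fun x hx => ?_, fun x hx => ?_⟩
    · rw [ContinuousLinearMap.mul_def, ContinuousLinearMap.comp_assoc]
      exact ha.1 _ (hb.1 x hx)
    · rw [← star_eq_adjoint, star_mul, ContinuousLinearMap.mul_def,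
        ContinuousLinearMap.comp_assoc, star_eq_adjoint, star_eq_adjoint]
      exact hb.2 _ (ha.2 x hx)
  · apply Set.Subset.antisymm
    · intro a ha
      have hstar' : ∀ c ∈ Set.centralizer Ba, star c ∈ Set.centralizer Ba :=
        fun c hc => Set.star_mem_centralizer' hstar hc
      have hastar : star a ∈ Set.centralizer (Set.centralizer Ba) :=
        Set.star_mem_centralizer' hstar' ha
      rw [hBa]
      refine ⟨fun x hx => keyE E hE3 Ba hBa a ha x hx, fun x hx => ?_⟩
      rw [← star_eq_adjoint]
      exact keyE E hE3 Ba hBa (star a) hastar x hx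
    · intro a ha m hm
      exact (hm a ha).symm
end

section
/- E = C_{B'}(B(G,H)), i.e. the concrete von Neumann B-module E equals the full intertwiner space {x ∈ B(G,H) : ρ'(b') ∘ x = x ∘ b' for all b' ∈ B'}. -/
open ContinuousLinearMap

private lemma span_rep_aux {G H : Type*}
    [NormedAddCommGroup G] [InnerProductSpace ℂ G]
    [NormedAddCommGroup H] [InnerProductSpace ℂ H]
    (E : Submodule ℂ (G →L[ℂ] H)) (v : H)
    (hv : v ∈ Submodule.span ℂ {h : H | ∃ x ∈ E, ∃ g : G, x g = h}) :
    ∃ (n : ℕ) (Y : Fin n → (G →L[ℂ] H)) (gs : Fin n → G),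
      (∀ j, Y j ∈ E) ∧ v = ∑ j, Y j (gs j) := by
  induction hv using Submodule.span_induction with
  | mem h hh =>
      obtain ⟨y, hy, g, rfl⟩ := hh
      exact ⟨1, fun _ => y, fun _ => g, fun _ => hy, by simp⟩
  | zero => exact ⟨0, fun i => i.elim0, fun i => i.elim0, fun i => i.elim0, by simp⟩
  | add a b _ _ iha ihb =>
      obtain ⟨n1, Y1, g1, hm1, rfl⟩ := iha
      obtain ⟨n2, Y2, g2, hm2, rfl⟩ := ihb
      refine ⟨n1 + n2, Fin.append Y1 Y2, Fin.append g1 g2, ?_, ?_⟩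
      · intro j
        refine Fin.addCases (fun i => ?_) (fun i => ?_) j <;>
          simp [Fin.append_left, Fin.append_right, hm1 _, hm2 _]
      · rw [Fin.sum_univ_add]
        simp [Fin.append_left, Fin.append_right]
  | smul c a _ ih =>
      obtain ⟨n, Y, gs, hm, rfl⟩ := ih
      exact ⟨n, fun j => c • Y j, gs, fun j => E.smul_mem c (hm j),
        by simp [Finset.smul_sum]⟩

private lemma exists_inverse {H : Type*} [NormedAddCommGroup H] [InnerProductSpace ℂ H]
    [CompleteSpace H]
    (d : H →L[ℂ] H) (δ : ℝ) (hδ : 0 < δ)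
    (hlow : ∀ u : H, δ * ‖u‖ ^ 2 ≤ (inner ℂ (d u) u : ℂ).re) :
    ∃ r : H →L[ℂ] H, (∀ h, d (r h) = h) ∧ (∀ h, r (d h) = h) := by
  have hbelow : ∀ u : H, δ * ‖u‖ ≤ ‖d u‖ := by
    intro u
    rcases eq_or_ne ‖u‖ 0 with h0 | h0
    · simp [h0, norm_nonneg]
    have h1 : (inner ℂ (d u) u : ℂ).re ≤ ‖d u‖ * ‖u‖ := by
      simpa using re_inner_le_norm (𝕜 := ℂ) (d u) u
    have h2 := hlow u
    have h3 : 0 < ‖u‖ := lt_of_le_of_ne (norm_nonneg u) (Ne.symm h0)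
    nlinarith
  have hker : d.ker = ⊥ := by
    rw [LinearMap.ker_eq_bot']
    intro u hu
    have := hbelow u
    rw [show d u = 0 from hu] at this
    simp only [norm_zero] at this
    have : ‖u‖ ≤ 0 := by nlinarith
    simpa using le_antisymm this (norm_nonneg u)
  have hanti : AntilipschitzWith (δ⁻¹).toNNReal d := by
    apply d.antilipschitz_of_bound
    intro u
    rw [Real.coe_toNNReal _ (le_of_lt (by positivity))]
    have hinv : δ * δ⁻¹ = 1 := mul_inv_cancel₀ (ne_of_gt hδ)
    nlinarith [hbelow u, norm_nonneg (d u)]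
  have hclosed : IsClosed (Set.range ⇑d) :=
    hanti.isClosed_range d.uniformContinuous
  have hclosed' : IsClosed ((d.range : Submodule ℂ H) : Set H) := by
    have : ((d.range : Submodule ℂ H) : Set H) = Set.range ⇑d := by
      ext v; simp [LinearMap.mem_range]
    rw [this]; exact hclosed
  haveI : CompleteSpace d.range := hclosed'.completeSpace_coe
  have hrange : d.range = ⊤ := by
    rw [← Submodule.orthogonal_eq_bot_iff]
    rw [Submodule.eq_bot_iff]
    intro u hu
    rw [Submodule.mem_orthogonal] at hu
    have h0 : (inner ℂ (d u) u : ℂ) = 0 := hu (d u) (LinearMap.mem_range_self _ u)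
    have h1 := hlow u
    rw [h0] at h1
    simp only [Complex.zero_re] at h1
    have : ‖u‖ ^ 2 ≤ 0 := by nlinarith
    have : ‖u‖ = 0 := by nlinarith [norm_nonneg u, sq_nonneg ‖u‖]
    simpa using this
  refine ⟨(ContinuousLinearEquiv.ofBijective d hker hrange).symm.toContinuousLinearMap, ?_, ?_⟩
  · intro h
    exact ContinuousLinearEquiv.ofBijective_apply_symm_apply d hker hrange h
  · intro h
    exact ContinuousLinearEquiv.ofBijective_symm_apply_apply d hker hrange h

set_option maxHeartbeats 1600000 in
/-- A concrete von Neumann `B`-module `E` equals the full intertwiner space. -/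
theorem vonNeumann_module_eq_intertwiner_space'
    {G H : Type*}
    [NormedAddCommGroup G] [InnerProductSpace ℂ G] [CompleteSpace G]
    [NormedAddCommGroup H] [InnerProductSpace ℂ H] [CompleteSpace H]
    (B : VonNeumannAlgebra G)
    (E : Submodule ℂ (G →L[ℂ] H))
    (hE1 : ∀ x ∈ E, ∀ y ∈ E, (adjoint x).comp y ∈ B)
    (hE2 : ∀ x ∈ E, ∀ b ∈ B, x.comp b ∈ E)
    (hE3 : ∀ T : G →L[ℂ] H, ⇑T ∈ closure ((fun S : G →L[ℂ] H => ⇑S) '' (E : Set (G →L[ℂ] H))) → T ∈ (E : Set (G →L[ℂ] H)))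
    (hE4 : Dense (Submodule.span ℂ {h : H | ∃ x ∈ E, ∃ g : G, x g = h} : Set H))
    (ρ' : (G →L[ℂ] G) → (H →L[ℂ] H))
    (hρ_star : ∀ a ∈ B.commutant, ρ' (star a) = star (ρ' a))
    (hρ_int : ∀ b' ∈ B.commutant, ∀ x ∈ E, ∀ g : G, ρ' b' (x g) = x (b' g))
    :
    (E : Set (G →L[ℂ] H)) =
      {x : G →L[ℂ] H | ∀ b' ∈ B.commutant, (ρ' b').comp x = x.comp b'} := by
  apply Set.Subset.antisymm
  · intro x hx
    simp only [Set.mem_setOf_eq]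
    intro b' hb'
    ext g
    simp only [comp_apply]
    exact hρ_int b' hb' x hx g
  · intro x hx
    simp only [Set.mem_setOf_eq] at hx
    have key : ∀ (s : Finset G) (ε : ℝ), 0 < ε →
        ∃ e ∈ E, ∀ g ∈ s, ‖e g - x g‖ < ε := by
      intro s ε hε
      -- pick approximating finite families
      have hpick : ∀ g : G, ∃ (n : ℕ) (Y : Fin n → (G →L[ℂ] H)) (gs : Fin n → G),
          (∀ j, Y j ∈ E) ∧ (g ∈ s → ‖x g - ∑ j, Y j (gs j)‖ < ε / 2) := by
        intro g
        by_cases hg : g ∈ s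
        · obtain ⟨v, hv⟩ := Metric.dense_iff.mp hE4 (x g) (ε / 2) (by positivity)
          obtain ⟨n, Y, gs, hm, rfl⟩ := span_rep_aux E v hv.2
          refine ⟨n, Y, gs, hm, fun _ => ?_⟩
          rw [← dist_eq_norm, dist_comm]
          exact Metric.mem_ball.mp hv.1
        · exact ⟨0, fun i => i.elim0, fun i => i.elim0, fun i => i.elim0,
            fun h => absurd h hg⟩
      choose n Y gs hYmem hdist using hpick
      let ι := Σ g : {a : G // a ∈ s}, Fin (n g.1)
      let Y' : ι → (G →L[ℂ] H) := fun i => Y i.1.1 i.2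
      let gs' : ι → G := fun i => gs i.1.1 i.2
      let c : H →L[ℂ] H := ∑ i : ι, (Y' i) ∘L (adjoint (Y' i))
      set K := 1 + ∑ i : ι, ‖gs' i‖ with hKdef
      have hKpos : 0 < K := by
        have : 0 ≤ ∑ i : ι, ‖gs' i‖ := Finset.sum_nonneg fun i _ => norm_nonneg _
        linarith
      set δ := min 1 ((ε / (2 * K)) ^ 2) with hδdef
      have hδpos : 0 < δ := lt_min one_pos (by positivity)
      have hsqrtδ : Real.sqrt δ ≤ ε / (2 * K) := by
        calc Real.sqrt δ ≤ Real.sqrt ((ε / (2 * K)) ^ 2) :=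
              Real.sqrt_le_sqrt (min_le_right _ _)
        _ = ε / (2 * K) := Real.sqrt_sq (by positivity)
      have hsδpos : 0 < Real.sqrt δ := Real.sqrt_pos.mpr hδpos
      have hsδsq : Real.sqrt δ * Real.sqrt δ = δ := Real.mul_self_sqrt hδpos.le
      let d : H →L[ℂ] H := (δ : ℂ) • 1 + c
      have hc_app : ∀ u : H, c u = ∑ i : ι, Y' i (adjoint (Y' i) u) := by
        intro u; simp [c, ContinuousLinearMap.sum_apply]
      have hd_app : ∀ u : H, d u = (δ : ℂ) • u + c u := by
        intro u; simp [d]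
      have hY'mem : ∀ i : ι, Y' i ∈ E := fun i => hYmem i.1.1 i.2
      have hre_self : ∀ v : H, (inner ℂ v v : ℂ).re = ‖v‖ ^ 2 := fun v => by
        simpa using inner_self_eq_norm_sq (𝕜 := ℂ) v
      have hre_selfG : ∀ v : G, (inner ℂ v v : ℂ).re = ‖v‖ ^ 2 := fun v => by
        simpa using inner_self_eq_norm_sq (𝕜 := ℂ) v
      have hmul_re : ∀ (t : ℝ) (z : ℂ), ((t : ℂ) * z).re = t * z.re := fun t z => by
        simp [Complex.mul_re]
      have hinner : ∀ u w : H, (inner ℂ (c u) w : ℂ)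
          = ∑ i : ι, (inner ℂ (adjoint (Y' i) u) (adjoint (Y' i) w) : ℂ) := by
        intro u w
        rw [hc_app, sum_inner]
        refine Finset.sum_congr rfl fun i _ => ?_
        exact (ContinuousLinearMap.adjoint_inner_right _ _ _).symm
      have hsym_c : ∀ u w : H, (inner ℂ (c u) w : ℂ) = inner ℂ u (c w) := by
        intro u w
        rw [← inner_conj_symm u (c w), hinner, hinner, map_sum]
        refine Finset.sum_congr rfl fun i _ => ?_
        exact (inner_conj_symm _ _).symm
      have hre : ∀ u : H, (inner ℂ (c u) u : ℂ).re = ∑ i : ι, ‖adjoint (Y' i) u‖ ^ 2 := by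
        intro u
        rw [hinner, Complex.re_sum]
        exact Finset.sum_congr rfl fun i _ => hre_selfG _
      have hcre_nonneg : ∀ u : H, 0 ≤ (inner ℂ (c u) u : ℂ).re := by
        intro u; rw [hre]; positivity
      have hd_re : ∀ u : H, (inner ℂ (d u) u : ℂ).re
          = δ * ‖u‖ ^ 2 + (inner ℂ (c u) u : ℂ).re := by
        intro u
        rw [hd_app, inner_add_left, Complex.add_re, inner_smul_left,
          Complex.conj_ofReal, hmul_re, hre_self]
      have hd_low : ∀ u : H, δ * ‖u‖ ^ 2 ≤ (inner ℂ (d u) u : ℂ).re := by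
        intro u; rw [hd_re]; linarith [hcre_nonneg u]
      obtain ⟨r, hdr, hrd⟩ := exists_inverse d δ hδpos hd_low
      have hsym_d : ∀ u w : H, (inner ℂ (d u) w : ℂ) = inner ℂ u (d w) := by
        intro u w
        rw [hd_app, hd_app, inner_add_left, inner_add_right, hsym_c,
          inner_smul_left, inner_smul_right, Complex.conj_ofReal]
      have hsym_r : ∀ u w : H, (inner ℂ (r u) w : ℂ) = inner ℂ u (r w) := by
        intro u w
        calc (inner ℂ (r u) w : ℂ) = inner ℂ (r u) (d (r w)) := by rw [hdr]
        _ = inner ℂ (d (r u)) (r w) := (hsym_d _ _).symm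
        _ = inner ℂ u (r w) := by rw [hdr]
      have hr_norm : ∀ h : H, δ * ‖r h‖ ≤ ‖h‖ := by
        intro h
        have h1 : δ * ‖r h‖ ^ 2 ≤ (inner ℂ (d (r h)) (r h) : ℂ).re := hd_low (r h)
        rw [hdr] at h1
        have h2 : (inner ℂ h (r h) : ℂ).re ≤ ‖h‖ * ‖r h‖ := by
          simpa using re_inner_le_norm (𝕜 := ℂ) h (r h)
        rcases eq_or_ne ‖r h‖ 0 with h0 | h0
        · rw [h0]; simp [norm_nonneg]
        · have h3 : 0 < ‖r h‖ := lt_of_le_of_ne (norm_nonneg _) (Ne.symm h0)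
          nlinarith
      have hsq_bound : ∀ u : H, 4 * δ * (inner ℂ (c u) u : ℂ).re ≤ ‖d u‖ ^ 2 := by
        intro u
        have e4 : ((inner ℂ ((δ : ℂ) • u) (c u) : ℂ)).re = δ * (inner ℂ (c u) u : ℂ).re := by
          rw [inner_smul_left, Complex.conj_ofReal, hmul_re]
          have h5 : ((inner ℂ u (c u) : ℂ)).re = (inner ℂ (c u) u : ℂ).re := by
            rw [← inner_conj_symm (c u) u, Complex.conj_re]
          rw [h5]
        have e1 : ‖d u‖ ^ 2 = ‖(δ : ℂ) • u‖ ^ 2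
            + 2 * ((inner ℂ ((δ : ℂ) • u) (c u) : ℂ)).re + ‖c u‖ ^ 2 := by
          rw [hd_app]
          exact norm_add_sq (𝕜 := ℂ) ((δ : ℂ) • u) (c u)
        have e3 : ‖(δ : ℂ) • u - c u‖ ^ 2 = ‖(δ : ℂ) • u‖ ^ 2
            - 2 * ((inner ℂ ((δ : ℂ) • u) (c u) : ℂ)).re + ‖c u‖ ^ 2 := by
          exact norm_sub_sq (𝕜 := ℂ) ((δ : ℂ) • u) (c u)
        have e2 : 0 ≤ ‖(δ : ℂ) • u - c u‖ ^ 2 := sq_nonneg _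
        nlinarith [e1, e2, e3, e4]
      have hadj_bound : ∀ (i : ι) (h : H),
          2 * Real.sqrt δ * ‖adjoint (Y' i) (r h)‖ ≤ ‖h‖ := by
        intro i h
        have h1 : ‖adjoint (Y' i) (r h)‖ ^ 2 ≤ (inner ℂ (c (r h)) (r h) : ℂ).re := by
          rw [hre]
          exact Finset.single_le_sum (f := fun j => ‖adjoint (Y' j) (r h)‖ ^ 2)
            (fun j _ => by positivity) (Finset.mem_univ i)
        have h2 := hsq_bound (r h)
        rw [hdr] at h2
        have h3 : (2 * Real.sqrt δ * ‖adjoint (Y' i) (r h)‖) ^ 2 ≤ ‖h‖ ^ 2 := by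
          have h4 : (2 * Real.sqrt δ * ‖adjoint (Y' i) (r h)‖) ^ 2
              = 4 * (Real.sqrt δ * Real.sqrt δ) * ‖adjoint (Y' i) (r h)‖ ^ 2 := by
            ring
          rw [hsδsq] at h4
          rw [h4]
          nlinarith [mul_le_mul_of_nonneg_left h1 (by positivity : (0:ℝ) ≤ 4 * δ)]
        calc 2 * Real.sqrt δ * ‖adjoint (Y' i) (r h)‖
            = Real.sqrt ((2 * Real.sqrt δ * ‖adjoint (Y' i) (r h)‖) ^ 2) :=
              (Real.sqrt_sq (by positivity)).symm
        _ ≤ Real.sqrt (‖h‖ ^ 2) := Real.sqrt_le_sqrt h3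
        _ = ‖h‖ := Real.sqrt_sq (norm_nonneg _)
      have hry_bound : ∀ (i : ι) (g : G), 2 * Real.sqrt δ * ‖r (Y' i g)‖ ≤ ‖g‖ := by
        intro i g
        set w := r (Y' i g) with hw
        have e1 : (‖w‖ : ℝ) ^ 2 = (inner ℂ (Y' i g) (r w) : ℂ).re := by
          rw [← hsym_r, ← hw]
          rw [inner_self_eq_norm_sq_to_K]
          simp [← Complex.ofReal_pow]
        have e2 : (inner ℂ (Y' i g) (r w) : ℂ) = inner ℂ g (adjoint (Y' i) (r w)) :=
          (ContinuousLinearMap.adjoint_inner_right _ _ _).symm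
        have e3 : (inner ℂ g (adjoint (Y' i) (r w)) : ℂ).re
            ≤ ‖g‖ * ‖adjoint (Y' i) (r w)‖ := by
          simpa using re_inner_le_norm (𝕜 := ℂ) g (adjoint (Y' i) (r w))
        have e4 := hadj_bound i w
        have step1 : ‖w‖ ^ 2 ≤ ‖g‖ * ‖adjoint (Y' i) (r w)‖ := by
          rw [e1, e2]; exact e3
        have step2 : 2 * Real.sqrt δ * ‖w‖ ^ 2 ≤ ‖g‖ * ‖w‖ := by
          calc 2 * Real.sqrt δ * ‖w‖ ^ 2
              ≤ 2 * Real.sqrt δ * (‖g‖ * ‖adjoint (Y' i) (r w)‖) :=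
                mul_le_mul_of_nonneg_left step1 (by positivity)
          _ = ‖g‖ * (2 * Real.sqrt δ * ‖adjoint (Y' i) (r w)‖) := by ring
          _ ≤ ‖g‖ * ‖w‖ := mul_le_mul_of_nonneg_left e4 (norm_nonneg g)
        rcases eq_or_ne ‖w‖ 0 with h0 | h0
        · rw [h0]; simp [norm_nonneg]
        · have h5 : 0 < ‖w‖ := lt_of_le_of_ne (norm_nonneg _) (Ne.symm h0)
          have step3 : (2 * Real.sqrt δ * ‖w‖) * ‖w‖ ≤ ‖g‖ * ‖w‖ := by nlinarith [step2]
          exact le_of_mul_le_mul_right step3 h5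
      -- membership facts
      have hint : ∀ w ∈ B.commutant, ∀ i : ι, (ρ' w) ∘L (Y' i) = (Y' i) ∘L w := by
        intro w hw i; ext g
        simp only [comp_apply]
        exact hρ_int w hw _ (hY'mem i) g
      have hadjstar : ∀ z : H →L[ℂ] H, adjoint (star z) = z := fun z => by
        rw [star_eq_adjoint, adjoint_adjoint]
      have hadjstarG : ∀ z : G →L[ℂ] G, adjoint (star z) = z := fun z => by
        rw [star_eq_adjoint, adjoint_adjoint]
      have hadj_int : ∀ w ∈ B.commutant, ∀ i : ι,
          (adjoint (Y' i)) ∘L (ρ' w) = w ∘L (adjoint (Y' i)) := by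
        intro w hw i
        have h1 := congrArg adjoint (hint (star w) (star_mem hw) i)
        rw [adjoint_comp, adjoint_comp, hρ_star w hw, hadjstar, hadjstarG] at h1
        exact h1
      have hdρ : ∀ w ∈ B.commutant, ∀ u : H, d (ρ' w u) = ρ' w (d u) := by
        intro w hw u
        have hcρ : c (ρ' w u) = ρ' w (c u) := by
          rw [hc_app, hc_app, map_sum]
          refine Finset.sum_congr rfl fun i _ => ?_
          have e1 : adjoint (Y' i) (ρ' w u) = w (adjoint (Y' i) u) := by
            have := congrFun (congrArg DFunLike.coe (hadj_int w hw i)) u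
            simpa using this
          rw [e1]
          exact (hρ_int w hw _ (hY'mem i) _).symm
        rw [hd_app, hd_app, hcρ, map_add, map_smul]
      have hrρ : ∀ w ∈ B.commutant, ∀ u : H, r (ρ' w u) = ρ' w (r u) := by
        intro w hw u
        have e1 : d (ρ' w (r u)) = ρ' w u := by rw [hdρ w hw (r u), hdr]
        rw [← e1, hrd]
      have hz_mem : ∀ i : ι, (adjoint (Y' i)) ∘L (r ∘L x) ∈ B := by
        intro i
        rw [← B.commutant_commutant, VonNeumannAlgebra.mem_commutant_iff]
        intro w hw
        ext g
        simp only [ContinuousLinearMap.mul_apply, comp_apply]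
        have e1 : x (w g) = ρ' w (x g) := by
          have := congrFun (congrArg DFunLike.coe (hx w hw)) g
          simpa using this.symm
        rw [e1, hrρ w hw]
        have e2 : adjoint (Y' i) (ρ' w (r (x g))) = w (adjoint (Y' i) (r (x g))) := by
          have := congrFun (congrArg DFunLike.coe (hadj_int w hw i)) (r (x g))
          simpa using this
        rw [e2]
      refine ⟨c ∘L (r ∘L x), ?_, ?_⟩
      · have he : c ∘L (r ∘L x) = ∑ i : ι, (Y' i) ∘L ((adjoint (Y' i)) ∘L (r ∘L x)) := by
          ext g
          simp [hc_app, ContinuousLinearMap.sum_apply]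
        rw [he]
        exact Submodule.sum_mem _ fun i _ => hE2 _ (hY'mem i) _ (hz_mem i)
      · intro g hg
        have hdiff : (c ∘L (r ∘L x)) g - x g = -((δ : ℂ) • r (x g)) := by
          have h1 : (δ : ℂ) • r (x g) + c (r (x g)) = x g := by
            rw [← hd_app]; exact hdr (x g)
          simp only [comp_apply]
          set R := r (x g) with hR
          rw [← h1]; abel
        rw [hdiff, norm_neg, norm_smul]
        have hnc : ‖(δ : ℂ)‖ = δ := by
          exact Complex.norm_of_nonneg hδpos.le
        rw [hnc]
        set v := ∑ j, Y g j (gs g j) with hv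
        have est1 : δ * ‖r (x g - v)‖ ≤ ‖x g - v‖ := hr_norm _
        have est3 : ‖x g - v‖ < ε / 2 := hdist g hg
        have hsum_le : (∑ j, ‖gs g j‖) ≤ K := by
          have h2 : (∑ j : Fin (n g), ‖gs' ⟨⟨g, hg⟩, j⟩‖) ≤ ∑ i : ι, ‖gs' i‖ := by
            rw [← Finset.univ_sigma_univ, Finset.sum_sigma]
            exact Finset.single_le_sum
              (f := fun a : {a : G // a ∈ s} => ∑ b : Fin (n a.1), ‖gs' ⟨a, b⟩‖)
              (fun a _ => Finset.sum_nonneg fun b _ => norm_nonneg _)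
              (Finset.mem_univ ⟨g, hg⟩)
          rw [hKdef]
          calc (∑ j, ‖gs g j‖) = ∑ j : Fin (n g), ‖gs' ⟨⟨g, hg⟩, j⟩‖ := rfl
          _ ≤ ∑ i : ι, ‖gs' i‖ := h2
          _ ≤ 1 + ∑ i : ι, ‖gs' i‖ := by linarith
        have est2 : δ * ‖r v‖ ≤ Real.sqrt δ / 2 * ∑ j, ‖gs g j‖ := by
          have hrv : r v = ∑ j, r (Y g j (gs g j)) := by rw [hv, map_sum]
          calc δ * ‖r v‖ ≤ δ * ∑ j, ‖r (Y g j (gs g j))‖ := by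
                apply mul_le_mul_of_nonneg_left _ hδpos.le
                rw [hrv]; exact norm_sum_le _ _
          _ = ∑ j, δ * ‖r (Y g j (gs g j))‖ := Finset.mul_sum _ _ _
          _ ≤ ∑ j, Real.sqrt δ / 2 * ‖gs g j‖ := by
                refine Finset.sum_le_sum fun j _ => ?_
                have hb : 2 * Real.sqrt δ * ‖r (Y g j (gs g j))‖ ≤ ‖gs g j‖ :=
                  hry_bound ⟨⟨g, hg⟩, j⟩ (gs g j)
                nlinarith [mul_le_mul_of_nonneg_left hb
                  (by positivity : (0:ℝ) ≤ Real.sqrt δ / 2), hsδsq,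
                  norm_nonneg (r (Y g j (gs g j)))]
          _ = Real.sqrt δ / 2 * ∑ j, ‖gs g j‖ := (Finset.mul_sum _ _ _).symm
        have est4 : Real.sqrt δ / 2 * ∑ j, ‖gs g j‖ ≤ ε / 4 := by
          have h2 : Real.sqrt δ / 2 * ∑ j, ‖gs g j‖ ≤ (ε / (2 * K)) / 2 * K := by
            apply mul_le_mul (by linarith) hsum_le
              (Finset.sum_nonneg fun j _ => norm_nonneg _) (by positivity)
          have h3 : (ε / (2 * K)) / 2 * K = ε / 4 := by
            field_simp; ring
          linarith
        have hsplit : r (x g) = r (x g - v) + r v := by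
          rw [map_sub]; abel
        calc δ * ‖r (x g)‖ = δ * ‖r (x g - v) + r v‖ := by rw [hsplit]
        _ ≤ δ * (‖r (x g - v)‖ + ‖r v‖) :=
              mul_le_mul_of_nonneg_left (norm_add_le _ _) hδpos.le
        _ = δ * ‖r (x g - v)‖ + δ * ‖r v‖ := by ring
        _ < ε := by linarith
    -- now conclude by SOT-closedness
    apply hE3
    rw [mem_closure_iff]
    intro o ho hxo
    obtain ⟨I, u, hu, hsub⟩ := isOpen_pi_iff.mp ho _ hxo
    have hrad : ∀ g : G, ∃ εg : ℝ, 0 < εg ∧ (g ∈ I → Metric.ball (x g) εg ⊆ u g) := by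
      intro g
      by_cases hg : g ∈ I
      · obtain ⟨εg, hεg, hball⟩ := Metric.isOpen_iff.mp (hu g hg).1 (x g) (hu g hg).2
        exact ⟨εg, hεg, fun _ => hball⟩
      · exact ⟨1, one_pos, fun h => absurd h hg⟩
    choose εg hεg hball using hrad
    have hmin : ∃ ε : ℝ, 0 < ε ∧ ∀ g ∈ I, ε ≤ εg g := by
      rcases I.eq_empty_or_nonempty with hI | hI
      · exact ⟨1, one_pos, by simp [hI]⟩
      · obtain ⟨g₀, hg₀, hg₀min⟩ := I.exists_min_image εg hI
        exact ⟨εg g₀, hεg g₀, fun g hg => hg₀min g hg⟩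
    obtain ⟨ε, hε, hεle⟩ := hmin
    obtain ⟨e, he, hest⟩ := key I ε hε
    refine ⟨⇑e, hsub ?_, Set.mem_image_of_mem _ he⟩
    intro g hg
    apply hball g hg
    rw [Metric.mem_ball, dist_eq_norm]
    exact lt_of_lt_of_le (hest g hg) (hεle g hg)


/-- A concrete von Neumann `B`-module `E` equals the full intertwiner space
`C_{B'}(B(G,H)) = {x ∈ B(G,H) : ρ'(b') ∘ x = x ∘ b' for all b' ∈ B'}`. -/
theorem vonNeumann_module_eq_intertwiner_space
    {G H : Type*}
    [NormedAddCommGroup G] [InnerProductSpace ℂ G] [CompleteSpace G]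
    [NormedAddCommGroup H] [InnerProductSpace ℂ H] [CompleteSpace H]
    (B : VonNeumannAlgebra G)
    (E : Submodule ℂ (G →L[ℂ] H))
    (hE1 : ∀ x ∈ E, ∀ y ∈ E, (adjoint x).comp y ∈ B)
    (hE2 : ∀ x ∈ E, ∀ b ∈ B, x.comp b ∈ E)
    (hE3 : SOTClosed (E : Set (G →L[ℂ] H)))
    (hE4 : Dense (Submodule.span ℂ {h : H | ∃ x ∈ E, ∃ g : G, x g = h} : Set H))
    (ρ' : (G →L[ℂ] G) → (H →L[ℂ] H))
    (hρ_one : ρ' 1 = 1)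
    (hρ_mul : ∀ a ∈ B.commutant, ∀ b ∈ B.commutant, ρ' (a * b) = ρ' a * ρ' b)
    (hρ_add : ∀ a ∈ B.commutant, ∀ b ∈ B.commutant, ρ' (a + b) = ρ' a + ρ' b)
    (hρ_smul : ∀ (c : ℂ), ∀ a ∈ B.commutant, ρ' (c • a) = c • ρ' a)
    (hρ_star : ∀ a ∈ B.commutant, ρ' (star a) = star (ρ' a))
    (hρ_int : ∀ b' ∈ B.commutant, ∀ x ∈ E, ∀ g : G, ρ' b' (x g) = x (b' g))
    :
    (E : Set (G →L[ℂ] H)) =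
      {x : G →L[ℂ] H | ∀ b' ∈ B.commutant, (ρ' b').comp x = x.comp b'} :=
  vonNeumann_module_eq_intertwiner_space' B E hE1 hE2 hE3 hE4 ρ' hρ_star hρ_int
end

section
/- B^a(E) equals the commutant of ρ'(B') in B(H); that is, {a ∈ B(H) : a ∘ x ∈ E and a* ∘ x ∈ E for all x ∈ E} = {a ∈ B(H) : a ρ'(b') = ρ'(b') a for all b' ∈ B'}. -/
set_option synthInstance.maxHeartbeats 1000000
set_option maxHeartbeats 1000000

open ContinuousLinearMap

section Aux

local notation "⟪" x ", " y "⟫" => @inner ℂ _ _ x y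

variable {G H : Type*}
    [NormedAddCommGroup G] [InnerProductSpace ℂ G] [CompleteSpace G]
    [NormedAddCommGroup H] [InnerProductSpace ℂ H] [CompleteSpace H]

lemma coord_norm_le_piLp {ι : Type*} [Fintype ι]
    (u : PiLp 2 (fun _ : ι => H)) (i : ι) : ‖u i‖ ≤ ‖u‖ := by
  have h1 : ‖u i‖ ^ 2 ≤ ‖u‖ ^ 2 := by
    rw [PiLp.norm_sq_eq_of_L2]
    exact Finset.single_le_sum (fun j _ => sq_nonneg ‖u j‖) (Finset.mem_univ i)
  exact (pow_le_pow_iff_left₀ (norm_nonneg _) (norm_nonneg _) two_ne_zero).mp h1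

/-- The key self-duality style lemma: if `y† ∘ T ∈ B` for all `y ∈ E`,
then `T ∈ E`. -/
lemma mem_of_adjoint_comp_mem
    (B : VonNeumannAlgebra G) (E : Submodule ℂ (G →L[ℂ] H))
    (hE1 : ∀ x ∈ E, ∀ y ∈ E, (adjoint x).comp y ∈ B)
    (hE2 : ∀ x ∈ E, ∀ b ∈ B, x.comp b ∈ E)
    (hE3 : SOTClosed (E : Set (G →L[ℂ] H)))
    (hE4 : Dense (Submodule.span ℂ {h : H | ∃ x ∈ E, ∃ g : G, x g = h} : Set H))
    (T : G →L[ℂ] H)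
    (hT : ∀ y ∈ E, (adjoint y).comp T ∈ B) : T ∈ E := by
  classical
  have haT : ∀ y ∈ E, (y.comp (adjoint y)).comp T ∈ E := fun y hy => by
    rw [comp_assoc]; exact hE2 y hy _ (hT y hy)
  have haS : ∀ y ∈ E, ∀ S ∈ E, (y.comp (adjoint y)).comp S ∈ E := fun y hy S hS => by
    rw [comp_assoc]; exact hE2 y hy _ (hE1 y hy S hS)
  -- main approximation step
  have approx : ∀ J : Finset G, ∀ δ : ℝ, 0 < δ →
      ∃ S ∈ E, ∀ g ∈ J, dist (S g) (T g) < δ := by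
    intro J δ hδ
    let V := PiLp 2 (fun _ : J => H)
    haveI hVc : CompleteSpace V := inferInstance
    let Φ : (G →L[ℂ] H) →ₗ[ℂ] V :=
      { toFun := fun S => WithLp.toLp 2 (fun i => S i.1)
        map_add' := fun S₁ S₂ => rfl
        map_smul' := fun c S => rfl }
    let M : Submodule ℂ V := (E.map Φ).topologicalClosure
    haveI : CompleteSpace M := (Submodule.isClosed_topologicalClosure _).completeSpace_coe
    have hMclosed : IsClosed (M : Set V) := Submodule.isClosed_topologicalClosure _
    set v : V := Φ T with hv
    set w : V := v - (M.orthogonalProjection v : V) with hwdef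
    have hw : w ∈ Mᗮ := Submodule.sub_starProjection_mem_orthogonal (K := M) v
    have hwz : ∀ y ∈ E, ∀ i : J, adjoint y (w i) = 0 := by
      intro y hy i
      set a : H →L[ℂ] H := y.comp (adjoint y) with ha
      have haa : adjoint a = a := by rw [ha, adjoint_comp, adjoint_adjoint]
      set D : V → V := fun m => WithLp.toLp 2 (fun j => a (m j)) with hD
      have hDc : Continuous D := by
        have h1 : Continuous fun (m : ∀ _ : J, H) => (fun j => a (m j) : ∀ _ : J, H) :=
          continuous_pi fun j => a.continuous.comp (continuous_apply j)
        exact (PiLp.continuous_toLp 2 (fun _ : J => H)).comp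
          (h1.comp (PiLp.continuous_ofLp 2 (fun _ : J => H)))
      have hDΦ : ∀ S : G →L[ℂ] H, D (Φ S) = Φ (a.comp S) := fun S => rfl
      have hDmap : ∀ m ∈ M, D m ∈ M := by
        intro m hm
        have h2 : (↑(E.map Φ) : Set V) ⊆ D ⁻¹' (M : Set V) := by
          rintro _ ⟨S, hS, rfl⟩
          show D (Φ S) ∈ (M : Set V)
          rw [hDΦ]
          exact Submodule.le_topologicalClosure _ ⟨a.comp S, haS y hy S hS, rfl⟩
        have h3 := closure_minimal h2 (hMclosed.preimage hDc)
        have hm' : m ∈ closure (↑(E.map Φ) : Set V) := by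
          rw [← Submodule.topologicalClosure_coe]; exact hm
        exact h3 hm'
      have hDv : D v ∈ M := by
        rw [hv, hDΦ]
        exact Submodule.le_topologicalClosure _ ⟨a.comp T, haT y hy, rfl⟩
      have hDw_M : D w ∈ M := by
        have hsub : D w = D v - D (M.orthogonalProjection v : V) := by
          ext j
          exact map_sub a _ _
        rw [hsub]
        exact M.sub_mem hDv (hDmap _ (M.orthogonalProjection v).2)
      have hDw_orth : D w ∈ Mᗮ := by
        rw [Submodule.mem_orthogonal]
        intro m hm
        have key : ⟪m, D w⟫ = ⟪D m, w⟫ := by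
          rw [PiLp.inner_apply, PiLp.inner_apply]
          refine Finset.sum_congr rfl fun j _ => ?_
          calc ⟪m j, a (w j)⟫ = ⟪adjoint a (m j), w j⟫ :=
                (adjoint_inner_left a (w j) (m j)).symm
            _ = ⟪a (m j), w j⟫ := by rw [haa]
        rw [key]
        exact (Submodule.mem_orthogonal M w).mp hw (D m) (hDmap m hm)
      have hDw0 : D w = 0 := by
        have h0 : ⟪D w, D w⟫ = (0 : ℂ) :=
          (Submodule.mem_orthogonal M (D w)).mp hDw_orth (D w) hDw_M
        exact inner_self_eq_zero.mp h0
      have hawi : a (w i) = 0 := by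
        have := congrArg (fun u : V => u i) hDw0
        exact this
      have h5 : ⟪adjoint y (w i), adjoint y (w i)⟫ = (0 : ℂ) := by
        rw [adjoint_inner_left]
        have : y (adjoint y (w i)) = a (w i) := rfl
        rw [this, hawi, inner_zero_right]
      exact inner_self_eq_zero.mp h5
    have hw0 : w = 0 := by
      have hcomp : ∀ i : J, w i = 0 := by
        intro i
        have horth : (Submodule.span ℂ {h : H | ∃ x ∈ E, ∃ g : G, x g = h} : Set H)
            ⊆ {u : H | ⟪u, w i⟫ = (0 : ℂ)} := by
          intro u hu
          induction hu using Submodule.span_induction with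
          | mem u hu =>
            obtain ⟨x, hx, g, rfl⟩ := hu
            show ⟪x g, w i⟫ = (0 : ℂ)
            rw [← adjoint_inner_right, hwz x hx i, inner_zero_right]
          | zero => show ⟪(0 : H), w i⟫ = 0; rw [inner_zero_left]
          | add u₁ u₂ h₁ h₂ ih₁ ih₂ =>
            show ⟪u₁ + u₂, w i⟫ = 0
            rw [inner_add_left, ih₁, ih₂, add_zero]
          | smul c u hu ih =>
            show ⟪c • u, w i⟫ = 0
            rw [inner_smul_left, ih, mul_zero]
        have hcl : IsClosed {u : H | ⟪u, w i⟫ = (0 : ℂ)} :=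
          isClosed_eq (continuous_id.inner continuous_const) continuous_const
        have hwi : ⟪w i, w i⟫ = (0 : ℂ) := closure_minimal horth hcl (hE4 (w i))
        exact inner_self_eq_zero.mp hwi
      ext i
      simpa using hcomp i
    have hvM : v ∈ M := by
      have : v = (M.orthogonalProjection v : V) := by
        rw [sub_eq_zero] at hw0
        exact hw0
      rw [this]
      exact (M.orthogonalProjection v).2
    have hvcl : v ∈ closure (↑(E.map Φ) : Set V) := by
      rw [← Submodule.topologicalClosure_coe]; exact hvM
    obtain ⟨m, hmmem, hmd⟩ := Metric.mem_closure_iff.mp hvcl δ hδ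
    obtain ⟨S, hS, rfl⟩ := hmmem
    refine ⟨S, hS, fun g hg => ?_⟩
    calc dist (S g) (T g) = ‖T g - S g‖ := by rw [dist_eq_norm, norm_sub_rev]
      _ = ‖(v - Φ S) ⟨g, hg⟩‖ := rfl
      _ ≤ ‖v - Φ S‖ := coord_norm_le_piLp _ _
      _ = dist v (Φ S) := (dist_eq_norm _ _).symm
      _ < δ := hmd
  -- conclude via SOT-closedness
  apply hE3 T
  rw [mem_closure_iff_nhds]
  intro t ht
  rw [nhds_pi] at ht
  obtain ⟨I, hIfin, t', ht', hsub⟩ := Filter.mem_pi.1 ht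
  have hballs : ∀ g : G, ∃ ε : ℝ, 0 < ε ∧ Metric.ball (T g) ε ⊆ t' g := by
    intro g
    obtain ⟨ε, hε, hb⟩ := Metric.mem_nhds_iff.1 (ht' g)
    exact ⟨ε, hε, hb⟩
  choose ε hεpos hεball using hballs
  rcases (hIfin.toFinset).eq_empty_or_nonempty with hJ | hJ
  · have hIempty : I = ∅ := by
      exact Set.Finite.toFinset_eq_empty.mp hJ
    refine ⟨⇑(0 : G →L[ℂ] H), hsub ?_, ⟨0, E.zero_mem, rfl⟩⟩
    intro i hi
    rw [hIempty] at hi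
    exact absurd hi (Set.notMem_empty i)
  · set J := hIfin.toFinset
    set δ := J.inf' hJ ε with hδdef
    have hδpos : 0 < δ := by
      rw [hδdef, Finset.lt_inf'_iff]
      exact fun g _ => hεpos g
    obtain ⟨S, hS, hSapprox⟩ := approx J δ hδpos
    refine ⟨⇑S, hsub ?_, ⟨S, hS, rfl⟩⟩
    intro g hg
    have hgJ : g ∈ J := (Set.Finite.mem_toFinset hIfin).2 hg
    apply hεball g
    rw [Metric.mem_ball]
    exact lt_of_lt_of_le (hSapprox g hgJ) (Finset.inf'_le ε hgJ)

end Aux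

/-- `Bᵃ(E)` equals the commutant of `ρ'(B')` in `B(H)`. -/
theorem adjointable_operators_eq_commutant_of_representation
    {G H : Type*}
    [NormedAddCommGroup G] [InnerProductSpace ℂ G] [CompleteSpace G]
    [NormedAddCommGroup H] [InnerProductSpace ℂ H] [CompleteSpace H]
    (B : VonNeumannAlgebra G)
    (E : Submodule ℂ (G →L[ℂ] H))
    (hE1 : ∀ x ∈ E, ∀ y ∈ E, (adjoint x).comp y ∈ B)
    (hE2 : ∀ x ∈ E, ∀ b ∈ B, x.comp b ∈ E)
    (hE3 : SOTClosed (E : Set (G →L[ℂ] H)))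
    (hE4 : Dense (Submodule.span ℂ {h : H | ∃ x ∈ E, ∃ g : G, x g = h} : Set H))
    (ρ' : (G →L[ℂ] G) → (H →L[ℂ] H))
    (hρ_one : ρ' 1 = 1)
    (hρ_mul : ∀ a ∈ B.commutant, ∀ b ∈ B.commutant, ρ' (a * b) = ρ' a * ρ' b)
    (hρ_add : ∀ a ∈ B.commutant, ∀ b ∈ B.commutant, ρ' (a + b) = ρ' a + ρ' b)
    (hρ_smul : ∀ (c : ℂ), ∀ a ∈ B.commutant, ρ' (c • a) = c • ρ' a)
    (hρ_star : ∀ a ∈ B.commutant, ρ' (star a) = star (ρ' a))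
    (hρ_int : ∀ b' ∈ B.commutant, ∀ x ∈ E, ∀ g : G, ρ' b' (x g) = x (b' g))
    :
    {a : H →L[ℂ] H | (∀ x ∈ E, a.comp x ∈ E) ∧ (∀ x ∈ E, (adjoint a).comp x ∈ E)}
      = {a : H →L[ℂ] H | ∀ b' ∈ B.commutant, a * ρ' b' = ρ' b' * a} := by
  ext a
  simp only [Set.mem_setOf_eq]
  constructor
  · rintro ⟨h1, _⟩ b' hb'
    apply ContinuousLinearMap.ext_on hE4
    rintro h ⟨x, hx, g, rfl⟩
    have hint := hρ_int b' hb' (a.comp x) (h1 x hx) g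
    calc (a * ρ' b') (x g) = a (ρ' b' (x g)) := rfl
      _ = a (x (b' g)) := by rw [hρ_int b' hb' x hx g]
      _ = (a.comp x) (b' g) := rfl
      _ = ρ' b' ((a.comp x) g) := hint.symm
      _ = (ρ' b' * a) (x g) := rfl
  · intro ha
    -- `star a` also commutes with the image of the commutant
    have hstar : ∀ b' ∈ B.commutant, adjoint a * ρ' b' = ρ' b' * adjoint a := by
      intro b' hb'
      have hb's : star b' ∈ B.commutant := star_mem hb'
      have h := congrArg star (ha (star b') hb's)
      rw [star_mul, star_mul, hρ_star b' hb', star_star] at h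
      rw [← star_eq_adjoint]
      exact h.symm
    -- main step: any commuting `c` maps `E` into `E`
    have hzB : ∀ c : H →L[ℂ] H, (∀ b' ∈ B.commutant, c * ρ' b' = ρ' b' * c) →
        ∀ x ∈ E, c.comp x ∈ E := by
      intro c hc x hx
      apply mem_of_adjoint_comp_mem B E hE1 hE2 hE3 hE4
      intro y hy
      have hmem : (adjoint y).comp (c.comp x) ∈ B.commutant.commutant := by
        rw [VonNeumannAlgebra.mem_commutant_iff]
        intro b' hb'
        have hb's : star b' ∈ B.commutant := star_mem hb'
        have hyb : (adjoint y).comp (ρ' b') = b'.comp (adjoint y) := by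
          have h1 : (ρ' (star b')).comp y = y.comp (star b') := by
            ext g; exact hρ_int (star b') hb's y hy g
          have h2 : (adjoint (ρ' b')).comp y = y.comp (star b') := by
            rw [← star_eq_adjoint, ← hρ_star b' hb']; exact h1
          calc (adjoint y).comp (ρ' b')
              = adjoint ((adjoint (ρ' b')).comp y) := by
                rw [adjoint_comp, adjoint_adjoint]
            _ = adjoint (y.comp (star b')) := by rw [h2]
            _ = (adjoint (star b')).comp (adjoint y) := by rw [adjoint_comp]
            _ = b'.comp (adjoint y) := by rw [← star_eq_adjoint, star_star]
        ext g
        show b' ((adjoint y) (c (x (g)))) = (adjoint y) (c (x (b' g)))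
        rw [← hρ_int b' hb' x hx g]
        have hc' : c (ρ' b' (x g)) = ρ' b' (c (x g)) := by
          have := congrArg (fun f : H →L[ℂ] H => f (x g)) (hc b' hb')
          simpa [mul_apply] using this
        rw [hc']
        have := congrArg (fun f : H →L[ℂ] G => f (c (x g))) hyb
        simpa [comp_apply] using this.symm
      rw [B.commutant_commutant] at hmem
      exact hmem
    exact ⟨hzB a ha, hzB (adjoint a) hstar⟩
end

section
/- Suppose g₀ ∈ G is a cyclic vector for B, i.e. {b g₀ : b ∈ B} is dense in G. Then for every h ∈ H with ‖h‖ = 1 and every ε > 0 there exist x ∈ E with x ∘ x* ∘ x = x (a partial isometry belonging to E) and g ∈ G with ‖g‖ = 1 such that ‖h − x g‖ < ε. -/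
open ContinuousLinearMap

open RCLike Filter
open scoped InnerProductSpace Topology

section Aux

private lemma real_le_of_sq_le_sq {r t : ℝ} (hr : 0 ≤ r) (ht : 0 ≤ t) (h : r^2 ≤ t^2) :
    r ≤ t := by nlinarith

private lemma real_eq_of_sq_eq_sq {r t : ℝ} (hr : 0 ≤ r) (ht : 0 ≤ t) (h : r^2 = t^2) :
    r = t := by nlinarith

private lemma div_bound_aux {c x b : ℝ} (h0 : 0 < x) (h3 : c * x^2 ≤ b * x) : c * x ≤ b := by
  nlinarith

private lemma p4_aux {c x b q : ℝ} (hc : 0 < c) (hb : 0 ≤ b) (hq : 0 ≤ q)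
    (h1 : q ≤ b * x) (h2 : c * x ≤ b) : c^2 * q ≤ c * b^2 := by
  nlinarith [mul_le_mul_of_nonneg_left h1 (sq_nonneg c),
    mul_le_mul_of_nonneg_left h2 (mul_nonneg hc.le hb)]

private lemma pi_aux {p q : ℝ} (hp : 0 ≤ p) (h : p ≤ q) : p^2 - 2*q^2 + q^2 ≤ 0 := by
  nlinarith

private lemma sq_nonpos_eq_zero {r : ℝ} (hr : 0 ≤ r) (h : r^2 ≤ 0) : r = 0 := by
  nlinarith

private lemma isClosed_setCentralizer {A : Type*} [NormedRing A] (s : Set A) :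
    IsClosed (Set.centralizer s) := by
  have : Set.centralizer s = ⋂ g ∈ s, {x | g * x = x * g} := by
    ext x; simp [Set.mem_centralizer_iff]
  rw [this]
  exact isClosed_biInter fun g _ =>
    isClosed_eq (continuous_mul_left g) (continuous_mul_right g)

private lemma cfc_complex_mem_elemental {A : Type*} [CStarAlgebra A] (a : A) (g : ℂ → ℂ) :
    cfc g a ∈ StarAlgebra.elemental ℂ a := by
  refine cfc_cases (· ∈ StarAlgebra.elemental ℂ a) a g (zero_mem _) fun hg ha => ?_
  rw [cfcHom_eq_of_isStarNormal]
  exact SetLike.coe_mem _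

private lemma commute_cfc_of_commute {A : Type*} [CStarAlgebra A] {a c : A}
    (ha : IsSelfAdjoint a) (h : c * a = a * c) (f : ℝ → ℝ) : c * cfc f a = cfc f a * c := by
  have h2 : star c * a = a * star c := by
    have := congrArg star h
    simp only [star_mul, ha.star_eq] at this
    exact this.symm
  have hmem : a ∈ StarSubalgebra.centralizer ℂ ({c} : Set A) := by
    rw [StarSubalgebra.mem_centralizer_iff]
    rintro g hg
    rw [Set.mem_singleton_iff] at hg
    subst hg
    exact ⟨h, h2⟩
  have hclosed : IsClosed ((StarSubalgebra.centralizer ℂ ({c} : Set A)) : Set A) := by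
    rw [StarSubalgebra.coe_centralizer]
    exact isClosed_setCentralizer _
  have hle := StarAlgebra.elemental.le_of_mem (R := ℂ) hclosed hmem
  have hmem2 : cfc f a ∈ StarSubalgebra.centralizer ℂ ({c} : Set A) := by
    apply hle
    rw [cfc_real_eq_complex f ha]
    exact cfc_complex_mem_elemental a _
  rw [StarSubalgebra.mem_centralizer_iff] at hmem2
  exact (hmem2 c rfl).1

end Aux

set_option maxHeartbeats 1000000 in
/-- If `g₀` is cyclic for `B`, every unit vector of `H` is approximated by `x g` with
`x` a partial isometry in `E` and `g` a unit vector of `G`. -/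
theorem approx_by_partialIsometry_of_cyclic
    {G H : Type*}
    [NormedAddCommGroup G] [InnerProductSpace ℂ G] [CompleteSpace G]
    [NormedAddCommGroup H] [InnerProductSpace ℂ H] [CompleteSpace H]
    (B : VonNeumannAlgebra G)
    (E : Submodule ℂ (G →L[ℂ] H))
    (hE1 : ∀ x ∈ E, ∀ y ∈ E, (adjoint x).comp y ∈ B)
    (hE2 : ∀ x ∈ E, ∀ b ∈ B, x.comp b ∈ E)
    (hE3 : SOTClosed (E : Set (G →L[ℂ] H)))
    (hE4 : Dense (Submodule.span ℂ {h : H | ∃ x ∈ E, ∃ g : G, x g = h} : Set H))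
    (g₀ : G) (hg₀ : Dense ((fun b : G →L[ℂ] G => b g₀) '' (B : Set (G →L[ℂ] G)))) :
    ∀ h : H, ‖h‖ = 1 → ∀ ε > 0, ∃ x ∈ E, x.comp ((adjoint x).comp x) = x ∧
      ∃ g : G, ‖g‖ = 1 ∧ ‖h - x g‖ < ε := by
  intro h hh ε hε
  have hre_ofReal_mul : ∀ (r : ℝ) (z : ℂ), re ((r : ℂ) * z) = r * re z := fun r z => by
    simp
  set δ0 : ℝ := min ε 1 / 2 with hδ0
  have hδ0pos : 0 < δ0 := by
    rw [hδ0]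
    have := lt_min hε one_pos
    linarith
  have hδ0le : δ0 ≤ 1 / 2 := by
    rw [hδ0]
    have : min ε 1 ≤ 1 := min_le_right _ _
    linarith
  -- Step 1: {y g₀ : y ∈ E} is dense in H
  set ev : (G →L[ℂ] H) →ₗ[ℂ] H :=
    { toFun := fun T => T g₀
      map_add' := fun u v => rfl
      map_smul' := fun c u => rfl } with hev
  set D : Submodule ℂ H := E.map ev with hDdef
  have hDset : (D : Set H) = (fun T : G →L[ℂ] H => T g₀) '' ↑E := by
    ext z
    simp [hDdef, hev, Submodule.mem_map, Set.mem_image]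
  have hgen : {h : H | ∃ x ∈ E, ∃ g : G, x g = h} ⊆ closure (D : Set H) := by
    rintro z ⟨x, hx, g, rfl⟩
    rw [Metric.mem_closure_iff]
    intro r hr
    have hq : 0 < r / (‖x‖ + 1) := by positivity
    obtain ⟨z', ⟨b, hb, rfl⟩, hdist⟩ := hg₀.exists_dist_lt g hq
    refine ⟨x (b g₀), ?_, ?_⟩
    · rw [hDset]
      exact ⟨x.comp b, hE2 x hx b hb, rfl⟩
    · rw [dist_eq_norm, ← map_sub]
      calc ‖x (g - b g₀)‖ ≤ ‖x‖ * ‖g - b g₀‖ := x.le_opNorm _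
        _ ≤ (‖x‖ + 1) * ‖g - b g₀‖ := by
            apply mul_le_mul_of_nonneg_right (by linarith [norm_nonneg x]) (norm_nonneg _)
        _ < r := by
            rw [dist_eq_norm] at hdist
            rw [mul_comm, ← lt_div_iff₀ (by positivity)]
            exact hdist
  have hD : Dense ((fun T : G →L[ℂ] H => T g₀) '' ↑E) := by
    rw [← hDset]
    rw [dense_iff_closure_eq]
    apply Set.eq_univ_of_univ_subset
    have h1 : (Submodule.span ℂ {h : H | ∃ x ∈ E, ∃ g : G, x g = h} : Set H)
        ⊆ closure (D : Set H) := by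
      rw [← Submodule.topologicalClosure_coe]
      apply SetLike.coe_subset_coe.mpr
      apply Submodule.span_le.mpr
      rw [Submodule.topologicalClosure_coe]
      exact hgen
    calc Set.univ = closure (Submodule.span ℂ {h : H | ∃ x ∈ E, ∃ g : G, x g = h} : Set H) :=
          hE4.closure_eq.symm
      _ ⊆ closure (closure (D : Set H)) := closure_mono h1
      _ = closure (D : Set H) := closure_closure
  obtain ⟨z, ⟨y, hy, rfl⟩, hyg⟩ := hD.exists_dist_lt h hδ0pos
  rw [dist_eq_norm] at hyg
  -- Step 2: the operator a = y* y and its square root s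
  set a : G →L[ℂ] G := (adjoint y).comp y with ha_def
  have ha_mem : a ∈ B := hE1 y hy y hy
  have ha_sa : IsSelfAdjoint a := by
    rw [isSelfAdjoint_iff']
    rw [ha_def, adjoint_comp, adjoint_adjoint]
  have hay : ∀ g : G, ⟪a g, g⟫_ℂ = ⟪y g, y g⟫_ℂ := fun g => by exact adjoint_inner_left y g (y g)
  have hre_nonneg : ∀ g : G, 0 ≤ re ⟪a g, g⟫_ℂ := by
    intro g
    rw [hay g, inner_self_eq_norm_sq (𝕜 := ℂ)]
    positivity
  have ha_pos : (0 : G →L[ℂ] G) ≤ a := by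
    rw [nonneg_iff_isPositive]
    exact ⟨ContinuousLinearMap.isSelfAdjoint_iff_isSymmetric.mp ha_sa, fun g => hre_nonneg g⟩
  have hsp : ∀ t ∈ spectrum ℝ a, (0:ℝ) ≤ t := spectrum_nonneg_of_nonneg ha_pos
  set s : G →L[ℂ] G := cfc Real.sqrt a with hs_def
  have hs_sa : IsSelfAdjoint s := cfc_predicate _ a
  have hss : s * s = a := by
    rw [hs_def, ← cfc_mul ..]
    conv_rhs => rw [← cfc_id ℝ a]
    exact cfc_congr fun t ht => Real.mul_self_sqrt (hsp t ht)
  have hs_mem : s ∈ B := by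
    have hmem : s ∈ Set.centralizer (Set.centralizer (B : Set (G →L[ℂ] G))) := by
      rw [Set.mem_centralizer_iff]
      intro c hc
      exact commute_cfc_of_commute ha_sa ((hc a ha_mem).symm) Real.sqrt
    rwa [B.centralizer_centralizer] at hmem
  have h_inner_s : ∀ p q : G, ⟪s p, q⟫_ℂ = ⟪p, s q⟫_ℂ := by
    intro p q
    conv_lhs => rw [← hs_sa.adjoint_eq]
    exact adjoint_inner_left s q p
  have h_inner_a : ∀ p q : G, ⟪a p, q⟫_ℂ = ⟪p, a q⟫_ℂ := by
    intro p q
    conv_lhs => rw [← ha_sa.adjoint_eq]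
    exact adjoint_inner_left a q p
  have hsz_sq : ∀ z : G, ‖s z‖^2 = re ⟪a z, z⟫_ℂ := by
    intro z
    rw [← hss]
    have h1 : (s * s) z = s (s z) := rfl
    rw [h1, h_inner_s (s z) z, ← inner_self_eq_norm_sq (𝕜 := ℂ)]
  have hyz_sq : ∀ z : G, ‖y z‖^2 = re ⟪a z, z⟫_ℂ := by
    intro z
    rw [hay z, inner_self_eq_norm_sq (𝕜 := ℂ)]
  have hnorm_ys : ∀ z : G, ‖y z‖ = ‖s z‖ := fun z =>
    real_eq_of_sq_eq_sq (norm_nonneg _) (norm_nonneg _) ((hyz_sq z).trans (hsz_sq z).symm)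
  -- Step 3: the sequence of approximants
  set dlt : ℕ → ℝ := fun n => 1 / (n + 1) with hdlt
  have hdpos : ∀ n, 0 < dlt n := fun n => by positivity
  have hdlim : Tendsto dlt atTop (𝓝 0) := tendsto_one_div_add_atTop_nhds_zero_nat
  set u : ℕ → (G →L[ℂ] G) := fun n => a + (dlt n : ℂ) • 1 with hu
  have hu_mem : ∀ n, u n ∈ B := fun n =>
    add_mem ha_mem (B.toStarSubalgebra.smul_mem (one_mem _) _)
  have hu_apply : ∀ n (g : G), u n g = a g + (dlt n : ℂ) • g := by
    intro n g; simp [hu]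
  have hu_inner : ∀ n (g : G), re ⟪u n g, g⟫_ℂ = re ⟪a g, g⟫_ℂ + dlt n * ‖g‖^2 := by
    intro n g
    rw [hu_apply, inner_add_left, map_add]
    congr 1
    rw [inner_smul_left, Complex.conj_ofReal, inner_self_eq_norm_sq_to_K (𝕜 := ℂ),
      hre_ofReal_mul]
    congr 1
    rw [← ofReal_pow, ofReal_re]
  have hu_unit : ∀ n, IsUnit (u n) := by
    intro n
    apply isUnit_of_forall_le_norm_inner_map (u n) (c := ⟨dlt n, (hdpos n).le⟩)
      (by exact_mod_cast hdpos n)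
    intro g
    calc ‖g‖^2 * ((⟨dlt n, (hdpos n).le⟩ : NNReal) : ℝ)
        = ‖g‖^2 * dlt n := rfl
      _ ≤ re ⟪u n g, g⟫_ℂ := by
          rw [hu_inner n g, mul_comm]
          linarith [hre_nonneg g]
      _ ≤ ‖⟪u n g, g⟫_ℂ‖ := re_le_norm _
  set w : ℕ → (G →L[ℂ] G) := fun n => (((hu_unit n).unit⁻¹ : (G →L[ℂ] G)ˣ) : G →L[ℂ] G)
    with hw
  have huw : ∀ n, u n * w n = 1 := by
    intro n
    rw [hw]
    conv_lhs => rw [← (hu_unit n).unit_spec]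
    exact ((hu_unit n).unit).mul_inv
  have hwu : ∀ n, w n * u n = 1 := by
    intro n
    rw [hw]
    conv_lhs => rw [← (hu_unit n).unit_spec]
    exact ((hu_unit n).unit).inv_mul
  have hw_mem : ∀ n, w n ∈ B := by
    intro n
    have hmem : w n ∈ Set.centralizer (Set.centralizer (B : Set (G →L[ℂ] G))) := by
      rw [Set.mem_centralizer_iff]
      intro c hc
      have h1 : Commute c (((hu_unit n).unit : (G →L[ℂ] G)ˣ) : G →L[ℂ] G) := by
        rw [(hu_unit n).unit_spec]
        exact (hc (u n) (hu_mem n)).symm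
      exact h1.units_inv_right.eq
    rwa [B.centralizer_centralizer] at hmem
  -- algebraic identities
  have h_as : a * s = s * a := by rw [← hss, mul_assoc]
  have h_su : ∀ n, s * u n = u n * s := by
    intro n
    rw [hu]
    simp only [mul_add, add_mul, mul_smul_comm, smul_mul_assoc, mul_one, one_mul]
    rw [h_as]
  have h_swc : ∀ n, s * w n = w n * s := by
    intro n
    have h1 : Commute s (((hu_unit n).unit : (G →L[ℂ] G)ˣ) : G →L[ℂ] G) := by
      rw [(hu_unit n).unit_spec]
      exact h_su n
    exact h1.units_inv_right.eq
  have h_wa : ∀ n, w n * a = 1 - (dlt n : ℂ) • w n := by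
    intro n
    have h1 := hwu n
    rw [hu, mul_add, mul_smul_comm, mul_one] at h1
    rw [eq_sub_iff_add_eq]
    exact h1
  have h_aw : ∀ n, a * w n = 1 - (dlt n : ℂ) • w n := by
    intro n
    have h1 := huw n
    rw [hu, add_mul, smul_mul_assoc, one_mul] at h1
    rw [eq_sub_iff_add_eq]
    exact h1
  have h_sws : ∀ n, s * (w n * s) = a * w n := by
    intro n
    rw [← mul_assoc, h_swc n, mul_assoc, hss, h_wa n, h_aw n]
  -- norm bounds
  have hP2 : ∀ n (g : G), dlt n * ‖w n g‖ ≤ ‖g‖ := by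
    intro n g
    have hz : u n (w n g) = g := by
      have h0 : u n (w n g) = (u n * w n) g := rfl
      rw [h0, huw n]; rfl
    have h1 : dlt n * ‖w n g‖^2 ≤ re ⟪u n (w n g), w n g⟫_ℂ := by
      rw [hu_inner]
      linarith [hre_nonneg (w n g)]
    have h2 : re ⟪u n (w n g), w n g⟫_ℂ ≤ ‖g‖ * ‖w n g‖ := by
      refine le_trans (re_le_norm _) ?_
      rw [hz]
      exact norm_inner_le_norm _ _
    have h3 : dlt n * ‖w n g‖^2 ≤ ‖g‖ * ‖w n g‖ := le_trans h1 h2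
    rcases eq_or_lt_of_le (norm_nonneg (w n g)) with h0 | h0
    · rw [← h0, mul_zero]
      exact norm_nonneg g
    · exact div_bound_aux h0 h3
  have hP3 : ∀ n (g : G), ‖a (w n g)‖ ≤ ‖g‖ := by
    intro n g
    have hz : a (w n g) + (dlt n : ℂ) • (w n g) = g := by
      have h0 : u n (w n g) = (u n * w n) g := rfl
      rw [← hu_apply n (w n g), h0, huw n]; rfl
    have hexp : ‖g‖^2 = ‖a (w n g)‖^2 + 2 * (dlt n * re ⟪a (w n g), w n g⟫_ℂ)
        + (dlt n)^2 * ‖w n g‖^2 := by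
      conv_lhs => rw [← hz]
      rw [norm_add_sq (𝕜 := ℂ)]
      have e1 : re ⟪a (w n g), (dlt n : ℂ) • (w n g)⟫_ℂ
          = dlt n * re ⟪a (w n g), w n g⟫_ℂ := by
        rw [inner_smul_right, hre_ofReal_mul]
      have e2 : ‖(dlt n : ℂ) • (w n g)‖^2 = (dlt n)^2 * ‖w n g‖^2 := by
        rw [norm_smul, Complex.norm_real, Real.norm_of_nonneg (hdpos n).le, mul_pow]
      rw [e1, e2]
    have hsq : ‖a (w n g)‖^2 ≤ ‖g‖^2 := by
      have m1 : 0 ≤ dlt n * re ⟪a (w n g), w n g⟫_ℂ :=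
        mul_nonneg (hdpos n).le (hre_nonneg (w n g))
      have m2 : 0 ≤ (dlt n)^2 * ‖w n g‖^2 := by positivity
      linarith [hexp]
    exact real_le_of_sq_le_sq (norm_nonneg _) (norm_nonneg _) hsq
  have hP4 : ∀ n (g : G), dlt n * ‖s (w n g)‖ ≤ Real.sqrt (dlt n) * ‖g‖ := by
    intro n g
    have h1 : ‖s (w n g)‖^2 = re ⟪a (w n g), w n g⟫_ℂ := hsz_sq (w n g)
    have h2 : re ⟪a (w n g), w n g⟫_ℂ ≤ re ⟪u n (w n g), w n g⟫_ℂ := by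
      rw [hu_inner]
      linarith [mul_nonneg (hdpos n).le (sq_nonneg ‖w n g‖)]
    have hz : u n (w n g) = g := by
      have h0 : u n (w n g) = (u n * w n) g := rfl
      rw [h0, huw n]; rfl
    have h3 : re ⟪u n (w n g), w n g⟫_ℂ ≤ ‖g‖ * ‖w n g‖ := by
      refine le_trans (re_le_norm _) ?_
      rw [hz]
      exact norm_inner_le_norm _ _
    have h4 : dlt n * ‖w n g‖ ≤ ‖g‖ := hP2 n g
    apply real_le_of_sq_le_sq (by positivity) (by positivity)
    have h5 : (Real.sqrt (dlt n) * ‖g‖)^2 = dlt n * ‖g‖^2 := by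
      rw [mul_pow, Real.sq_sqrt (hdpos n).le]
    rw [h5, mul_pow]
    exact p4_aux (hdpos n) (norm_nonneg g) (by positivity) (h1 ▸ le_trans h2 h3) h4
  -- the sequence X n = y ∘ (w n * s) of elements of E
  set X : ℕ → (G →L[ℂ] H) := fun n => y.comp (w n * s) with hX
  have hXmem : ∀ n, X n ∈ E := fun n => hE2 y hy _ (mul_mem (hw_mem n) hs_mem)
  have hXapp : ∀ n (g : G), X n g = y ((w n * s) g) := fun n g => rfl
  have hXs : ∀ n (g : G), X n (s g) = y ((a * w n) g) := by
    intro n g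
    rw [hXapp]
    congr 1
    have h1 : (w n * s) (s g) = (w n * s * s) g := rfl
    rw [h1, mul_assoc, hss]
    have h2 : (w n * a) g = (a * w n) g := by rw [h_wa n, h_aw n]
    exact h2
  have hXnorm : ∀ n (g : G), ‖X n g‖ = ‖(a * w n) g‖ := by
    intro n g
    rw [hXapp, hnorm_ys]
    have h0 : s ((w n * s) g) = (s * (w n * s)) g := rfl
    rw [h0, h_sws n]
  -- convergence of (a * w n) g
  haveI : CompleteSpace (LinearMap.ker (a : G →ₗ[ℂ] G)) := by
    exact (ContinuousLinearMap.isClosed_ker a).completeSpace_coe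
  haveI : (LinearMap.ker (a : G →ₗ[ℂ] G)).HasOrthogonalProjection :=
    Submodule.HasOrthogonalProjection.ofCompleteSpace _
  have hdecomp : ∀ g : G, ∃ k ∈ LinearMap.ker (a : G →ₗ[ℂ] G), ∃ p ∈ (LinearMap.ker (a : G →ₗ[ℂ] G))ᗮ, g = k + p :=
    fun g => (LinearMap.ker (a : G →ₗ[ℂ] G)).exists_add_mem_mem_orthogonal g
  have hker_orth : ((LinearMap.range (a : G →ₗ[ℂ] G) : Submodule ℂ G))ᗮ = LinearMap.ker (a : G →ₗ[ℂ] G) := by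
    ext z
    simp only [Submodule.mem_orthogonal, LinearMap.mem_range, LinearMap.mem_ker]
    constructor
    · intro hz
      have h1 : ⟪a z, a z⟫_ℂ = 0 := by
        have h2 := hz (a (a z)) ⟨a z, rfl⟩
        exact ((h_inner_a (a z) z).symm.trans h2)
      exact inner_self_eq_zero.mp h1
    · intro hz x hx
      obtain ⟨x', rfl⟩ := hx
      show ⟪a x', z⟫_ℂ = 0
      rw [h_inner_a x' z, show a z = 0 from hz, inner_zero_right]
  have hclos : ∀ p : G, p ∈ (LinearMap.ker (a : G →ₗ[ℂ] G))ᗮ →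
      p ∈ closure ((LinearMap.range (a : G →ₗ[ℂ] G) : Submodule ℂ G) : Set G) := by
    intro p hp
    rw [← Submodule.topologicalClosure_coe, ← Submodule.orthogonal_orthogonal_eq_closure,
      hker_orth]
    exact hp
  have h_aw_tail : ∀ n (r : G), (a * w n) (a r) - a r = -((dlt n : ℂ) • (a (w n r))) := by
    intro n r
    have h1 : (a * w n) (a r) = (a * w n * a) r := rfl
    have h2 : a * w n * a = a - (dlt n : ℂ) • (a * w n) := by
      rw [mul_assoc, h_wa n, mul_sub, mul_one, mul_smul_comm]
    rw [h1, h2]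
    simp only [sub_apply, smul_apply]
    have h3 : (a * w n) r = a (w n r) := rfl
    rw [h3]
    abel
  have hTp : ∀ p : G, p ∈ (LinearMap.ker (a : G →ₗ[ℂ] G))ᗮ →
      Tendsto (fun n => (a * w n) p) atTop (𝓝 p) := by
    intro p hp
    rw [Metric.tendsto_atTop]
    intro η hη
    obtain ⟨q, hq, hdq⟩ := Metric.mem_closure_iff.mp (hclos p hp) (η/3) (by positivity)
    obtain ⟨r, rfl⟩ := hq
    have hev : ∀ᶠ n in atTop, dlt n * ‖r‖ < η/3 := by
      have h1 : Tendsto (fun n => dlt n * ‖r‖) atTop (𝓝 (0 * ‖r‖)) := hdlim.mul_const ‖r‖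
      rw [zero_mul] at h1
      exact h1.eventually (gt_mem_nhds (by positivity))
    obtain ⟨N, hN⟩ := eventually_atTop.mp hev
    refine ⟨N, fun n hn => ?_⟩
    rw [dist_eq_norm]
    have e1 : ‖(a * w n) (p - a r)‖ ≤ ‖p - a r‖ := by
      have h0 : (a * w n) (p - a r) = a (w n (p - a r)) := rfl
      rw [h0]
      exact hP3 n _
    have e2 : ‖(a * w n) (a r) - a r‖ ≤ dlt n * ‖r‖ := by
      rw [h_aw_tail n r, norm_neg, norm_smul, Complex.norm_real, Real.norm_of_nonneg (hdpos n).le]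
      exact mul_le_mul_of_nonneg_left (hP3 n r) (hdpos n).le
    have e3 : ‖p - a r‖ < η/3 := by
      rw [← dist_eq_norm]
      exact hdq
    calc ‖(a * w n) p - p‖
        = ‖(a * w n) (p - a r) + ((a * w n) (a r) - a r) + (a r - p)‖ := by
          congr 1
          simp only [map_sub]
          abel
      _ ≤ ‖(a * w n) (p - a r)‖ + ‖(a * w n) (a r) - a r‖ + ‖a r - p‖ := norm_add₃_le
      _ < η/3 + η/3 + η/3 := by
          have e4 : ‖a r - p‖ < η/3 := by rw [norm_sub_rev]; exact e3
          have e5 : ‖(a * w n) (a r) - a r‖ < η/3 := lt_of_le_of_lt e2 (hN n hn)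
          have e6 : ‖(a * w n) (p - a r)‖ < η/3 := lt_of_le_of_lt e1 e3
          linarith
      _ = η := by ring
  have h_aw_comm : ∀ n, a * w n = w n * a := by intro n; rw [h_aw n, h_wa n]
  have hd_conv : ∀ g : G, CauchySeq (fun n => (a * w n) g) := by
    intro g
    obtain ⟨k, hk, p, hp, rfl⟩ := hdecomp g
    have hk0 : ∀ n, (a * w n) k = 0 := by
      intro n
      rw [h_aw_comm n]
      have h1 : (w n * a) k = w n (a k) := rfl
      rw [h1, show a k = 0 from LinearMap.mem_ker.mp hk, map_zero]
    have h0 : (fun n => (a * w n) (k + p)) = fun n => (a * w n) p := by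
      funext n
      rw [map_add, hk0 n, zero_add]
    rw [h0]
    exact (hTp p hp).cauchySeq
  -- Cauchy property of X n g, definition of v
  have hXdiff : ∀ (n m : ℕ) (g : G), ‖X n g - X m g‖ = ‖(a * w n) g - (a * w m) g‖ := by
    intro n m g
    have h1 : ∀ j, s ((w j * s) g) = (a * w j) g := by
      intro j
      have h0 : s ((w j * s) g) = (s * (w j * s)) g := rfl
      rw [h0, h_sws j]
    have e0 : X n g - X m g = y ((w n * s) g - (w m * s) g) := (map_sub y _ _).symm
    rw [e0, hnorm_ys, map_sub, h1 n, h1 m]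
  have hX_cauchy : ∀ g : G, CauchySeq (fun n => X n g) := by
    intro g
    have hc := hd_conv g
    rw [Metric.cauchySeq_iff] at hc ⊢
    intro η hη
    obtain ⟨N, hN⟩ := hc η hη
    refine ⟨N, fun m hm n hn => ?_⟩
    rw [dist_eq_norm, hXdiff m n g, ← dist_eq_norm]
    exact hN m hm n hn
  set vf : G → H := fun g => limUnder atTop (fun n => X n g) with hvf
  have hX_tendv : ∀ g : G, Tendsto (fun n => X n g) atTop (𝓝 (vf g)) := fun g =>
    (hX_cauchy g).tendsto_limUnder
  have hXbound : ∀ n (g : G), ‖X n g‖ ≤ ‖g‖ := by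
    intro n g
    rw [hXnorm n g]
    have h0 : (a * w n) g = a (w n g) := rfl
    rw [h0]
    exact hP3 n g
  have hvf_bound : ∀ g : G, ‖vf g‖ ≤ ‖g‖ := fun g =>
    le_of_tendsto (hX_tendv g).norm (Filter.Eventually.of_forall fun n => hXbound n g)
  set v : G →L[ℂ] H := LinearMap.mkContinuous
    { toFun := vf
      map_add' := fun g g' => tendsto_nhds_unique (hX_tendv (g + g'))
        (by
          have h0 := (hX_tendv g).add (hX_tendv g')
          simpa only [← map_add] using h0)
      map_smul' := fun c g => tendsto_nhds_unique (hX_tendv (c • g))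
        (by
          have h0 := (hX_tendv g).const_smul c
          simpa only [← map_smul, RingHom.id_apply] using h0) } 1
    (fun g => by rw [one_mul]; exact hvf_bound g) with hv
  have hv_app : ∀ g : G, v g = vf g := fun g => rfl
  have hv_tend : ∀ g : G, Tendsto (fun n => X n g) atTop (𝓝 (v g)) := fun g => hX_tendv g
  have hv_memE : v ∈ E := by
    apply hE3
    exact mem_closure_of_tendsto (tendsto_pi_nhds.mpr fun g => hv_tend g)
      (Filter.Eventually.of_forall fun n => ⟨X n, hXmem n, rfl⟩)
  have hvs : ∀ g : G, v (s g) = y g := by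
    intro g
    refine tendsto_nhds_unique (hv_tend (s g)) ?_
    rw [tendsto_iff_norm_sub_tendsto_zero]
    have hbound : ∀ n, ‖X n (s g) - y g‖ ≤ Real.sqrt (dlt n) * ‖g‖ := by
      intro n
      rw [hXs n g]
      have h1 : (a * w n) g - g = -((dlt n : ℂ) • (w n g)) := by
        rw [h_aw n]
        simp only [sub_apply, one_apply_eq_self, smul_apply]
        abel
      have h2 : y ((a * w n) g) - y g = y ((a * w n) g - g) := by rw [map_sub]
      rw [h2, h1, map_neg, map_smul, norm_neg, norm_smul, Complex.norm_real,
        Real.norm_of_nonneg (hdpos n).le, hnorm_ys]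
      exact hP4 n g
    have hsq : Tendsto (fun n => Real.sqrt (dlt n) * ‖g‖) atTop (𝓝 0) := by
      have h1 : Tendsto (fun n => Real.sqrt (dlt n)) atTop (𝓝 (Real.sqrt 0)) := hdlim.sqrt
      rw [Real.sqrt_zero] at h1
      have h2 : Tendsto (fun n => Real.sqrt (dlt n) * ‖g‖) atTop (𝓝 (0 * ‖g‖)) :=
        h1.mul_const ‖g‖
      rwa [zero_mul] at h2
    exact squeeze_zero (fun n => norm_nonneg _) hbound hsq
  have hv_norm_s : ∀ g : G, ‖v (s g)‖ = ‖s g‖ := fun g => by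
    rw [hvs g]; exact hnorm_ys g
  have hv_op_norm : ‖v‖ ≤ 1 := v.opNorm_le_bound zero_le_one fun g => by
    rw [one_mul]
    exact hvf_bound g
  have hadj_norm : ‖adjoint v‖ ≤ 1 := by
    rw [show ‖adjoint v‖ = ‖v‖ from (adjoint : (G →L[ℂ] H) ≃ₗᵢ⋆[ℂ] (H →L[ℂ] G)).norm_map v]
    exact hv_op_norm
  have hI3 : ∀ g : G, adjoint v (v (s g)) = s g := by
    intro g
    have hq1 : ‖adjoint v (v (s g))‖ ≤ ‖s g‖ := by
      calc ‖adjoint v (v (s g))‖ ≤ ‖adjoint v‖ * ‖v (s g)‖ := le_opNorm _ _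
        _ ≤ 1 * ‖s g‖ := mul_le_mul hadj_norm (hv_norm_s g).le (norm_nonneg _) zero_le_one
        _ = ‖s g‖ := one_mul _
    have hq2 : re ⟪adjoint v (v (s g)), s g⟫_ℂ = ‖s g‖^2 := by
      rw [adjoint_inner_left, inner_self_eq_norm_sq (𝕜 := ℂ), hv_norm_s g]
    have hq3 : ‖adjoint v (v (s g)) - s g‖^2 ≤ 0 := by
      rw [norm_sub_sq (𝕜 := ℂ), hq2]
      exact pi_aux (norm_nonneg _) hq1
    have hq4 : ‖adjoint v (v (s g)) - s g‖ = 0 :=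
      sq_nonpos_eq_zero (norm_nonneg _) hq3
    rw [← sub_eq_zero]
    exact norm_eq_zero.mp hq4
  have hs_ker : ∀ k : G, a k = 0 → s k = 0 := by
    intro k hk
    have h1 : ⟪s k, s k⟫_ℂ = 0 := by
      rw [h_inner_s k (s k)]
      have h0 : s (s k) = a k := by rw [← hss]; rfl
      rw [h0, hk, inner_zero_right]
    exact inner_self_eq_zero.mp h1
  have hv_ker : ∀ k : G, a k = 0 → v k = 0 := by
    intro k hk
    refine tendsto_nhds_unique (hv_tend k) ?_
    have h0 : ∀ n, X n k = 0 := by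
      intro n
      rw [hXapp]
      have h1 : (w n * s) k = w n (s k) := rfl
      rw [h1, hs_ker k hk, map_zero, map_zero]
    simp only [h0]
    exact tendsto_const_nhds
  -- v is a partial isometry
  have hPI : v.comp ((adjoint v).comp v) = v := by
    ext g
    obtain ⟨k, hk, p, hp, rfl⟩ := hdecomp g
    have hk' : a k = 0 := LinearMap.mem_ker.mp hk
    set φ : G →L[ℂ] H := v.comp ((adjoint v).comp v) - v with hφ
    have happ : ∀ z : G, φ z = v (adjoint v (v z)) - v z := fun z => rfl
    have hφk : φ k = 0 := by
      rw [happ, hv_ker k hk']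
      simp
    have hφr : ∀ x : G, φ (a x) = 0 := by
      intro x
      have h1 : a x = s (s x) := by rw [← hss]; rfl
      rw [happ, h1, hI3 (s x), sub_self]
    have hφp : φ p = 0 := by
      have hclosed : IsClosed {z : G | φ z = 0} := isClosed_eq φ.continuous continuous_const
      have hsubset : ((LinearMap.range (a : G →ₗ[ℂ] G) : Submodule ℂ G) : Set G) ⊆ {z : G | φ z = 0} := by
        rintro _ ⟨x, rfl⟩
        exact hφr x
      exact closure_minimal hsubset hclosed (hclos p hp)
    have hφ0 : φ (k + p) = 0 := by rw [map_add, hφk, hφp, add_zero]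
    rw [happ (k + p)] at hφ0
    exact sub_eq_zero.mp hφ0
  -- conclusion
  refine ⟨v, hv_memE, hPI, ?_⟩
  have hvg' : v (s g₀) = y g₀ := hvs g₀
  set t : ℝ := ‖y g₀‖ with ht
  have htg : ‖s g₀‖ = t := (hnorm_ys g₀).symm
  have htlt : |t - 1| < δ0 := by
    have h1 : |‖y g₀‖ - ‖h‖| ≤ ‖y g₀ - h‖ := abs_norm_sub_norm_le _ _
    rw [hh, norm_sub_rev] at h1
    exact lt_of_le_of_lt h1 hyg
  have htpos : 0 < t := by
    have h1 := (abs_lt.mp htlt).1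
    linarith
  refine ⟨((t⁻¹ : ℝ) : ℂ) • s g₀, ?_, ?_⟩
  · rw [norm_smul, Complex.norm_real, Real.norm_of_nonneg (inv_pos.mpr htpos).le, htg]
    field_simp
  · have hvsm : v (((t⁻¹ : ℝ) : ℂ) • s g₀) = ((t⁻¹ : ℝ) : ℂ) • y g₀ := by
      rw [map_smul, hvg']
    rw [hvsm]
    have hsplit : h - ((t⁻¹ : ℝ) : ℂ) • y g₀
        = (h - y g₀) + ((1 - ((t⁻¹ : ℝ) : ℂ)) • y g₀) := by
      rw [sub_smul, one_smul]
      abel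
    rw [hsplit]
    have h2 : ‖(1 - ((t⁻¹ : ℝ) : ℂ)) • y g₀‖ = |t - 1| := by
      rw [norm_smul]
      have hc : (1 - ((t⁻¹ : ℝ) : ℂ)) = (((1 - t⁻¹ : ℝ)) : ℂ) := by push_cast; ring
      rw [hc, Complex.norm_real, Real.norm_eq_abs, ← ht]
      rw [← abs_of_pos htpos, ← abs_mul]
      rw [abs_of_pos htpos]
      congr 1
      field_simp
    calc ‖(h - y g₀) + (1 - ((t⁻¹ : ℝ) : ℂ)) • y g₀‖
        ≤ ‖h - y g₀‖ + ‖(1 - ((t⁻¹ : ℝ) : ℂ)) • y g₀‖ := norm_add_le _ _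
      _ < δ0 + δ0 := by rw [h2]; exact add_lt_add hyg htlt
      _ ≤ ε := by
          rw [hδ0]
          have h3 := min_le_left ε 1
          linarith
end
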